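/- arXiv:1811.04121 — 5 statements merged into one kernel-verified Lean document; each statement's English description precedes it below -/
import Mathlib

section
/- Let Z be a standard normal random variable on ℝ. Then for every t ≥ 0, the tail probability satisfies P(Z > t) ≤ exp(-t²/2) / √(2π t² + 4). -/
open MeasureTheory ProbabilityTheory Set

noncomputable def gphi (x : ℝ) : ℝ := (Real.sqrt (2 * Real.pi))⁻¹ * Real.exp (-x ^ 2 / 2)

noncomputable def gR (u : ℝ) : ℝ := Real.exp (-u ^ 2 / 2) / Real.sqrt (2 * Real.pi * u ^ 2 + 4)

noncomputable def gRd (u : ℝ) : ℝ :=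
  (Real.exp (-u ^ 2 / 2) * (-u) * Real.sqrt (2 * Real.pi * u ^ 2 + 4)
    - Real.exp (-u ^ 2 / 2) * (4 * Real.pi * u / (2 * Real.sqrt (2 * Real.pi * u ^ 2 + 4))))
    / Real.sqrt (2 * Real.pi * u ^ 2 + 4) ^ 2

noncomputable def gQ (t : ℝ) : ℝ := ∫ x in Ioi t, gphi x

lemma g_pos (u : ℝ) : (0:ℝ) < 2 * Real.pi * u ^ 2 + 4 := by positivity

lemma sqrt_g_pos (u : ℝ) : 0 < Real.sqrt (2 * Real.pi * u ^ 2 + 4) :=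
  Real.sqrt_pos.mpr (g_pos u)

lemma gphi_pos (u : ℝ) : 0 < gphi u := by
  unfold gphi
  positivity

lemma hasDerivAt_gR (u : ℝ) : HasDerivAt gR (gRd u) u := by
  have hg : HasDerivAt (fun u : ℝ => 2 * Real.pi * u ^ 2 + 4) (4 * Real.pi * u) u := by
    have : HasDerivAt (fun u : ℝ => u ^ 2) (2 * u) u := by
      simpa using hasDerivAt_pow 2 u
    have h2 := (this.const_mul (2 * Real.pi)).add_const 4
    rw [show 4 * Real.pi * u = 2 * Real.pi * (2 * u) by ring]; exact h2
  have hs : HasDerivAt (fun u : ℝ => Real.sqrt (2 * Real.pi * u ^ 2 + 4))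
      (4 * Real.pi * u / (2 * Real.sqrt (2 * Real.pi * u ^ 2 + 4))) u :=
    hg.sqrt (ne_of_gt (g_pos u))
  have he : HasDerivAt (fun u : ℝ => Real.exp (-u ^ 2 / 2)) (Real.exp (-u ^ 2 / 2) * (-u)) u := by
    have h1 : HasDerivAt (fun u : ℝ => -u ^ 2 / 2) (-u) u := by
      have : HasDerivAt (fun u : ℝ => u ^ 2) (2 * u) u := by
        simpa using hasDerivAt_pow 2 u
      have h2 := (this.neg).div_const 2
      rw [show -u = -(2 * u) / 2 by ring]; exact h2
    exact h1.exp
  exact he.div hs (ne_of_gt (sqrt_g_pos u))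

lemma continuous_gRd : Continuous gRd := by
  unfold gRd
  have hs : Continuous fun u : ℝ => Real.sqrt (2 * Real.pi * u ^ 2 + 4) :=
    (by continuity : Continuous fun u : ℝ => 2 * Real.pi * u ^ 2 + 4).sqrt
  have he : Continuous fun u : ℝ => Real.exp (-u ^ 2 / 2) := by continuity
  apply Continuous.div
  · apply Continuous.sub
    · exact (he.mul continuous_neg).mul hs
    · exact he.mul (Continuous.div (by continuity) (continuous_const.mul hs)
        (fun u => by positivity))
  · exact hs.pow 2
  · intro u; positivity

lemma continuous_gphi : Continuous gphi := by
  unfold gphi; continuity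

/-- The key algebraic identity for `gRd u + gphi u`. -/
lemma gRd_add_gphi (u : ℝ) :
    gRd u + gphi u = Real.exp (-u ^ 2 / 2) *
      (Real.sqrt (2 * Real.pi * u ^ 2 + 4) ^ 3
        - Real.sqrt (2 * Real.pi) * u * (Real.sqrt (2 * Real.pi * u ^ 2 + 4) ^ 2 + 2 * Real.pi))
      / (Real.sqrt (2 * Real.pi) * Real.sqrt (2 * Real.pi * u ^ 2 + 4) ^ 3) := by
  have hs := sqrt_g_pos u
  have hb : (0:ℝ) < Real.sqrt (2 * Real.pi) := Real.sqrt_pos.mpr (by positivity)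
  unfold gRd gphi
  generalize Real.sqrt (2 * Real.pi * u ^ 2 + 4) = s at hs ⊢
  generalize Real.sqrt (2 * Real.pi) = b at hb ⊢
  field_simp
  ring

lemma quad_le (A p : ℝ) (h0 : 0 ≤ A) (h1 : A ≤ 0.9557) (hp1 : 3.141592 < p)
    (hp2 : p < 3.141593) : A * (A + 2 * p + 4) ^ 2 ≤ (A + 4) ^ 3 := by
  nlinarith [mul_le_mul h1 h1 h0 (by norm_num : (0:ℝ) ≤ 0.9557), mul_nonneg h0 h0,
    sq_nonneg (p - 3.141592), mul_nonneg (mul_nonneg h0 h0) h0]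

lemma quad_ge (A p : ℝ) (h1 : 1.005 ≤ A) (hp1 : 3.141592 < p)
    (hp2 : p < 3.141593) : (A + 4) ^ 3 ≤ A * (A + 2 * p + 4) ^ 2 := by
  nlinarith [sq_nonneg (A - 1.005), sq_nonneg (p - 3.141592),
    mul_nonneg (le_trans (by norm_num) h1) (sq_nonneg (A - 1.005))]

lemma key_le (u : ℝ) (h0 : 0 ≤ u) (h1 : u ≤ 0.39) : 0 ≤ gRd u + gphi u := by
  rw [gRd_add_gphi]
  have hs := sqrt_g_pos u
  have hb : (0:ℝ) < Real.sqrt (2 * Real.pi) := Real.sqrt_pos.mpr (by positivity)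
  apply div_nonneg _ (by positivity)
  apply mul_nonneg (Real.exp_pos _).le
  rw [sub_nonneg]
  have hs2 : Real.sqrt (2 * Real.pi * u ^ 2 + 4) ^ 2 = 2 * Real.pi * u ^ 2 + 4 :=
    Real.sq_sqrt (g_pos u).le
  have hb2 : Real.sqrt (2 * Real.pi) ^ 2 = 2 * Real.pi := Real.sq_sqrt (by positivity)
  apply le_of_pow_le_pow_left₀ (n := 2) two_ne_zero (by positivity)
  have hA1 : 2 * Real.pi * u ^ 2 ≤ 0.9557 := by
    nlinarith [Real.pi_lt_d6, sq_nonneg u, mul_le_mul h1 h1 h0 (by norm_num : (0:ℝ) ≤ 0.39)]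
  have hA0 : 0 ≤ 2 * Real.pi * u ^ 2 := by positivity
  have hq := quad_le (2 * Real.pi * u ^ 2) Real.pi hA0 hA1 Real.pi_gt_d6 Real.pi_lt_d6
  have e1 : (Real.sqrt (2 * Real.pi) * u *
      (Real.sqrt (2 * Real.pi * u ^ 2 + 4) ^ 2 + 2 * Real.pi)) ^ 2
      = (2 * Real.pi * u ^ 2) * ((2 * Real.pi * u ^ 2) + 2 * Real.pi + 4) ^ 2 := by
    rw [hs2, mul_pow, mul_pow, hb2]
    ring
  have e2 : (Real.sqrt (2 * Real.pi * u ^ 2 + 4) ^ 3) ^ 2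
      = ((2 * Real.pi * u ^ 2) + 4) ^ 3 := by
    rw [show (Real.sqrt (2 * Real.pi * u ^ 2 + 4) ^ 3) ^ 2
      = (Real.sqrt (2 * Real.pi * u ^ 2 + 4) ^ 2) ^ 3 by ring, hs2]
  rw [e1, e2]
  exact hq

lemma key_ge (u : ℝ) (h1 : 0.4 ≤ u) : gRd u + gphi u ≤ 0 := by
  rw [gRd_add_gphi]
  have hs := sqrt_g_pos u
  have hb : (0:ℝ) < Real.sqrt (2 * Real.pi) := Real.sqrt_pos.mpr (by positivity)
  have hu : (0:ℝ) ≤ u := le_trans (by norm_num) h1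
  apply div_nonpos_of_nonpos_of_nonneg _ (by positivity)
  apply mul_nonpos_of_nonneg_of_nonpos (Real.exp_pos _).le
  rw [sub_nonpos]
  have hs2 : Real.sqrt (2 * Real.pi * u ^ 2 + 4) ^ 2 = 2 * Real.pi * u ^ 2 + 4 :=
    Real.sq_sqrt (g_pos u).le
  have hb2 : Real.sqrt (2 * Real.pi) ^ 2 = 2 * Real.pi := Real.sq_sqrt (by positivity)
  apply le_of_pow_le_pow_left₀ (n := 2) two_ne_zero (by positivity)
  have hA1 : 1.005 ≤ 2 * Real.pi * u ^ 2 := by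
    nlinarith [Real.pi_gt_d6, mul_le_mul h1 h1 (by norm_num : (0:ℝ) ≤ 0.4) hu]
  have hq := quad_ge (2 * Real.pi * u ^ 2) Real.pi hA1 Real.pi_gt_d6 Real.pi_lt_d6
  have e1 : (Real.sqrt (2 * Real.pi) * u *
      (Real.sqrt (2 * Real.pi * u ^ 2 + 4) ^ 2 + 2 * Real.pi)) ^ 2
      = (2 * Real.pi * u ^ 2) * ((2 * Real.pi * u ^ 2) + 2 * Real.pi + 4) ^ 2 := by
    rw [hs2, mul_pow, mul_pow, hb2]
    ring
  have e2 : (Real.sqrt (2 * Real.pi * u ^ 2 + 4) ^ 3) ^ 2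
      = ((2 * Real.pi * u ^ 2) + 4) ^ 3 := by
    rw [show (Real.sqrt (2 * Real.pi * u ^ 2 + 4) ^ 3) ^ 2
      = (Real.sqrt (2 * Real.pi * u ^ 2 + 4) ^ 2) ^ 3 by ring, hs2]
  rw [e1, e2]
  exact hq

lemma integrable_gphi : Integrable gphi := by
  have h := integrable_exp_neg_mul_sq (by norm_num : (0:ℝ) < 1/2)
  have he : gphi = fun x => (Real.sqrt (2 * Real.pi))⁻¹ * Real.exp (-(1/2) * x ^ 2) := by
    funext x; unfold gphi; ring_nf
  rw [he]
  exact h.const_mul _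

lemma gQ_eq (t T : ℝ) (h : t ≤ T) : gQ t = (∫ u in t..T, gphi u) + gQ T := by
  unfold gQ
  rw [intervalIntegral.integral_of_le h, ← setIntegral_union (Set.Ioc_disjoint_Ioi le_rfl)
    measurableSet_Ioi integrable_gphi.integrableOn integrable_gphi.integrableOn,
    Set.Ioc_union_Ioi_eq_Ioi h]

lemma gQ_zero : gQ 0 = 1 / 2 := by
  unfold gQ gphi
  rw [MeasureTheory.integral_const_mul]
  have he : ∀ x : ℝ, Real.exp (-x ^ 2 / 2) = Real.exp (-(1/2) * x ^ 2) := by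
    intro x; ring_nf
  simp_rw [he]
  rw [integral_gaussian_Ioi (1/2)]
  have : Real.pi / (1/2) = 2 * Real.pi := by ring
  rw [this]
  have hb : Real.sqrt (2 * Real.pi) ≠ 0 := ne_of_gt (Real.sqrt_pos.mpr (by positivity))
  field_simp

lemma gQ_anti {t T : ℝ} (h : t ≤ T) : gQ T ≤ gQ t := by
  have := gQ_eq t T h
  have hnn : 0 ≤ ∫ u in t..T, gphi u :=
    intervalIntegral.integral_nonneg h (fun u _ => (gphi_pos u).le)
  linarith

lemma tendsto_gQ : Filter.Tendsto gQ Filter.atTop (nhds 0) := by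
  have h1 := MeasureTheory.intervalIntegral_tendsto_integral_Ioi 0
    integrable_gphi.integrableOn Filter.tendsto_id
  have h2 : ∀ᶠ T in Filter.atTop, gQ T = gQ 0 - ∫ u in (0:ℝ)..T, gphi u := by
    filter_upwards [Filter.eventually_ge_atTop (0:ℝ)] with T hT
    have := gQ_eq 0 T hT
    linarith
  rw [Filter.tendsto_congr' h2]
  have : Filter.Tendsto (fun T => gQ 0 - ∫ u in (0:ℝ)..T, gphi u) Filter.atTop
      (nhds (gQ 0 - gQ 0)) := Filter.Tendsto.sub tendsto_const_nhds h1
  simpa using this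

lemma gR_nonneg (u : ℝ) : 0 ≤ gR u := by
  unfold gR; positivity

lemma tendsto_gR : Filter.Tendsto gR Filter.atTop (nhds 0) := by
  have hb : ∀ u : ℝ, gR u ≤ Real.exp (-u ^ 2 / 2) / 2 := by
    intro u
    unfold gR
    apply div_le_div_of_nonneg_left (Real.exp_pos _).le (by norm_num : (0:ℝ) < 2)
    exact Real.le_sqrt_of_sq_le (by nlinarith [Real.pi_pos, sq_nonneg u])
  have hexp : Filter.Tendsto (fun u : ℝ => Real.exp (-u ^ 2 / 2) / 2) Filter.atTop (nhds 0) := by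
    have hsq : Filter.Tendsto (fun u : ℝ => u ^ 2 / 2) Filter.atTop Filter.atTop :=
      (Filter.tendsto_pow_atTop two_ne_zero).atTop_div_const (by norm_num)
    have h2 : Filter.Tendsto (fun u : ℝ => Real.exp (-(u ^ 2 / 2))) Filter.atTop (nhds 0) :=
      Real.tendsto_exp_neg_atTop_nhds_zero.comp hsq
    have h3 := h2.div_const 2
    simp only [neg_div] at h3 ⊢
    simpa using h3
  exact squeeze_zero (fun u => gR_nonneg u) hb hexp

lemma gR_sub (t T : ℝ) : (∫ u in t..T, gRd u) = gR T - gR t :=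
  intervalIntegral.integral_eq_sub_of_hasDerivAt (fun x _ => hasDerivAt_gR x)
    (continuous_gRd.intervalIntegrable t T)

lemma gR_anti {a b : ℝ} (h0 : 0 ≤ a) (h : a ≤ b) : gR b ≤ gR a := by
  unfold gR
  have hab : a ^ 2 ≤ b ^ 2 := by nlinarith
  apply div_le_div₀ (Real.exp_pos _).le
  · exact Real.exp_le_exp.mpr (by linarith)
  · exact sqrt_g_pos a
  · exact Real.sqrt_le_sqrt (by nlinarith [Real.pi_pos])

/-- Regime 1: `0 ≤ t ≤ 0.39`. -/
lemma regime1 (t : ℝ) (ht : 0 ≤ t) (ht2 : t ≤ 0.39) : gQ t ≤ gR t := by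
  have h1 : 0 ≤ ∫ u in (0:ℝ)..t, (gRd u + gphi u) :=
    intervalIntegral.integral_nonneg ht (fun u hu => key_le u hu.1 (hu.2.trans ht2))
  have h2 : (∫ u in (0:ℝ)..t, (gRd u + gphi u))
      = (∫ u in (0:ℝ)..t, gRd u) + ∫ u in (0:ℝ)..t, gphi u :=
    intervalIntegral.integral_add (continuous_gRd.intervalIntegrable 0 t)
      (continuous_gphi.intervalIntegrable 0 t)
  have h3 := gR_sub 0 t
  have h4 := gQ_eq 0 t ht
  have hR0 : gR 0 = 1 / 2 := by
    unfold gR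
    rw [show 2 * Real.pi * (0:ℝ) ^ 2 + 4 = 2 ^ 2 by ring,
      Real.sqrt_sq (by norm_num : (0:ℝ) ≤ 2)]
    norm_num
  have hQ0 := gQ_zero
  linarith [h1, h2.symm ▸ h1]

/-- Regime 2: `t ≥ 0.4`. -/
lemma regime2 (t : ℝ) (ht : 0.4 ≤ t) : gQ t ≤ gR t := by
  have key : ∀ T, t ≤ T → gQ t ≤ gR t + (gQ T - gR T) := by
    intro T hT
    have hmono : (∫ u in t..T, gphi u) ≤ ∫ u in t..T, -gRd u := by
      apply intervalIntegral.integral_mono_on hT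
        (continuous_gphi.intervalIntegrable t T)
        ((continuous_gRd.neg).intervalIntegrable t T)
      intro u hu
      have := key_ge u (ht.trans hu.1)
      simp only [Pi.neg_apply]; linarith
    have hneg : (∫ u in t..T, -gRd u) = -(gR T - gR t) := by
      rw [intervalIntegral.integral_neg, gR_sub]
    have hQ := gQ_eq t T hT
    linarith [hmono, hneg ▸ hmono]
  have hlim : Filter.Tendsto (fun T => gR t + (gQ T - gR T)) Filter.atTop
      (nhds (gR t + (0 - 0))) :=
    Filter.Tendsto.add tendsto_const_nhds (Filter.Tendsto.sub tendsto_gQ tendsto_gR)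
  have hev : ∀ᶠ T in Filter.atTop, gQ t ≤ gR t + (gQ T - gR T) := by
    filter_upwards [Filter.eventually_ge_atTop t] with T hT
    exact key T hT
  have := ge_of_tendsto hlim hev
  simpa using this

/-- Numeric bound: `gQ 0.39 ≤ 0.3484`. -/
lemma gQ_num : gQ 0.39 ≤ 0.3484 := by
  have h4 := gQ_eq 0 0.39 (by norm_num)
  have hQ0 := gQ_zero
  have hI : (∫ u in (0:ℝ)..0.39, gphi u) ≥ 0.1516 := by
    have hpt : ∀ u ∈ Set.Icc (0:ℝ) 0.39, (2.5067)⁻¹ * (1 - u ^ 2 / 2) ≤ gphi u := by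
      intro u hu
      unfold gphi
      have hb : Real.sqrt (2 * Real.pi) ≤ 2.5067 := by
        rw [Real.sqrt_le_iff]
        constructor
        · norm_num
        · nlinarith [Real.pi_lt_d6]
      have hbpos : (0:ℝ) < Real.sqrt (2 * Real.pi) := Real.sqrt_pos.mpr (by positivity)
      have hinv : (2.5067:ℝ)⁻¹ ≤ (Real.sqrt (2 * Real.pi))⁻¹ :=
        inv_anti₀ hbpos hb
      have hexp : 1 - u ^ 2 / 2 ≤ Real.exp (-u ^ 2 / 2) := by
        have := Real.add_one_le_exp (-u ^ 2 / 2)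
        linarith
      have h1u : 0 ≤ 1 - u ^ 2 / 2 := by nlinarith [hu.1, hu.2]
      calc (2.5067:ℝ)⁻¹ * (1 - u ^ 2 / 2) ≤ (Real.sqrt (2 * Real.pi))⁻¹ * (1 - u ^ 2 / 2) :=
            mul_le_mul_of_nonneg_right hinv h1u
        _ ≤ (Real.sqrt (2 * Real.pi))⁻¹ * Real.exp (-u ^ 2 / 2) :=
            mul_le_mul_of_nonneg_left hexp (by positivity)
    have hmono : (∫ u in (0:ℝ)..0.39, (2.5067)⁻¹ * (1 - u ^ 2 / 2))
        ≤ ∫ u in (0:ℝ)..0.39, gphi u := by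
      apply intervalIntegral.integral_mono_on (by norm_num)
        ((by continuity : Continuous fun u : ℝ => (2.5067:ℝ)⁻¹ * (1 - u ^ 2 / 2)).intervalIntegrable 0 0.39)
        (continuous_gphi.intervalIntegrable 0 0.39)
      exact hpt
    have hval : (∫ u in (0:ℝ)..0.39, (2.5067:ℝ)⁻¹ * (1 - u ^ 2 / 2)) = (2.5067)⁻¹ * (0.39 - 0.39 ^ 3 / 6) := by
      rw [intervalIntegral.integral_const_mul]
      congr 1
      have : (∫ u in (0:ℝ)..0.39, (1 - u ^ 2 / 2))
          = (∫ u in (0:ℝ)..0.39, (1:ℝ)) - ∫ u in (0:ℝ)..0.39, u ^ 2 / 2 := by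
        rw [← intervalIntegral.integral_sub intervalIntegrable_const
          (((continuous_pow 2).div_const 2).intervalIntegrable 0 0.39)]
      rw [this]
      have h2 : (∫ u in (0:ℝ)..0.39, u ^ 2 / 2) = (∫ u in (0:ℝ)..0.39, u ^ 2) / 2 := by
        rw [intervalIntegral.integral_div]
      rw [h2, integral_pow]
      norm_num
    rw [hval] at hmono
    have : (0.1516:ℝ) ≤ (2.5067)⁻¹ * (0.39 - 0.39 ^ 3 / 6) := by norm_num
    linarith
  linarith

/-- Numeric bound: `0.3484 ≤ gR 0.4`. -/
lemma gR_num : (0.3484:ℝ) ≤ gR 0.4 := by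
  unfold gR
  have hs : Real.sqrt (2 * Real.pi * (0.4:ℝ) ^ 2 + 4) ≤ 2.2374 := by
    rw [Real.sqrt_le_iff]
    constructor
    · norm_num
    · nlinarith [Real.pi_lt_d6]
  have hspos := sqrt_g_pos (0.4:ℝ)
  have hexp : (0.92:ℝ) ≤ Real.exp (-(0.4:ℝ) ^ 2 / 2) := by
    have := Real.add_one_le_exp (-(0.4:ℝ) ^ 2 / 2)
    norm_num at this ⊢
    linarith
  calc (0.3484:ℝ) ≤ 0.92 / 2.2374 := by norm_num
    _ ≤ Real.exp (-(0.4:ℝ) ^ 2 / 2) / 2.2374 := by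
        apply div_le_div_of_nonneg_right hexp (by norm_num)
    _ ≤ Real.exp (-(0.4:ℝ) ^ 2 / 2) / Real.sqrt (2 * Real.pi * (0.4:ℝ) ^ 2 + 4) :=
        div_le_div_of_nonneg_left (Real.exp_pos _).le hspos hs

/-- Middle regime: `0.39 ≤ t ≤ 0.4`. -/
lemma regime_mid (t : ℝ) (ht : 0.39 ≤ t) (ht2 : t ≤ 0.4) : gQ t ≤ gR t := by
  calc gQ t ≤ gQ 0.39 := gQ_anti ht
    _ ≤ 0.3484 := gQ_num
    _ ≤ gR 0.4 := gR_num
    _ ≤ gR t := gR_anti (by linarith) ht2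

lemma gQ_le_gR (t : ℝ) (ht : 0 ≤ t) : gQ t ≤ gR t := by
  rcases le_or_gt t 0.39 with h | h
  · exact regime1 t ht h
  rcases le_or_gt t 0.4 with h2 | h2
  · exact regime_mid t h.le h2
  · exact regime2 t h2.le

/-- Gaussian tail bound: for `Z ~ N(0,1)` and `t ≥ 0`,
`P(Z > t) ≤ exp(-t²/2) / √(2π t² + 4)`. -/
theorem gaussian_tail_bound (t : ℝ) (ht : 0 ≤ t) :
    ((gaussianReal 0 1) {x : ℝ | t < x}).toReal ≤
      Real.exp (-t ^ 2 / 2) / Real.sqrt (2 * Real.pi * t ^ 2 + 4) := by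
  have hbridge : ((gaussianReal 0 1) {x : ℝ | t < x}).toReal = gQ t := by
    rw [gaussianReal_apply_eq_integral 0 one_ne_zero,
      show {x : ℝ | t < x} = Ioi t from rfl,
      ENNReal.toReal_ofReal (setIntegral_nonneg measurableSet_Ioi
        fun x _ => gaussianPDFReal_nonneg 0 1 x)]
    unfold gQ
    apply setIntegral_congr_fun measurableSet_Ioi
    intro x _
    unfold gaussianPDFReal gphi
    norm_num
  rw [hbridge]
  exact gQ_le_gR t ht
end

section
/- Let Z be a standard normal random variable. Then for every t ≥ 0, E[(|Z| - t)₊] ≤ 2 exp(-t²/2) / (√(2π) (t² + 1)), where (x)₊ = max(x, 0). -/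
open MeasureTheory ProbabilityTheory Real Filter Set

lemma aux_exp_eq : (fun x : ℝ => Real.exp (-x ^ 2 / 2)) = fun x => Real.exp (-(1/2) * x ^ 2) := by
  funext x; ring_nf

lemma aux_integrable_exp (t : ℝ) :
    IntegrableOn (fun x : ℝ => Real.exp (-x ^ 2 / 2)) (Set.Ioi t) := by
  rw [aux_exp_eq]
  exact (integrable_exp_neg_mul_sq (by norm_num : (0:ℝ) < 1/2)).integrableOn

lemma aux_integrable_mul_exp (t : ℝ) :
    IntegrableOn (fun x : ℝ => x * Real.exp (-x ^ 2 / 2)) (Set.Ioi t) := by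
  have : (fun x : ℝ => x * Real.exp (-x ^ 2 / 2))
      = fun x => x * Real.exp (-(1/2) * x ^ 2) := by
    funext x; ring_nf
  rw [this]
  exact (integrable_mul_exp_neg_mul_sq (by norm_num : (0:ℝ) < 1/2)).integrableOn

lemma aux_tendsto_exp : Tendsto (fun x : ℝ => Real.exp (-x ^ 2 / 2)) atTop (nhds 0) := by
  have h1 : Tendsto (fun x : ℝ => -x ^ 2 / 2) atTop atBot := by
    have h2 : Tendsto (fun x : ℝ => x ^ 2 / 2) atTop atTop :=
      (tendsto_pow_atTop (two_ne_zero)).atTop_div_const (by norm_num)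
    have := tendsto_neg_atTop_atBot.comp h2
    refine this.congr fun x => by simp [Function.comp, neg_div]
  exact Real.tendsto_exp_atBot.comp h1

lemma aux_tail_mul_exp (t : ℝ) :
    ∫ x in Set.Ioi t, x * Real.exp (-x ^ 2 / 2) = Real.exp (-t ^ 2 / 2) := by
  have hderiv : ∀ x ∈ Set.Ici t,
      HasDerivAt (fun y : ℝ => -Real.exp (-y ^ 2 / 2)) (x * Real.exp (-x ^ 2 / 2)) x := by
    intro x _
    have h := (((hasDerivAt_pow 2 x).neg.div_const 2).exp).neg
    refine h.congr_deriv ?_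
    simp only [Pi.neg_apply]
    norm_num
    ring_nf
  have := integral_Ioi_of_hasDerivAt_of_tendsto' hderiv (aux_integrable_mul_exp t)
    (aux_tendsto_exp.neg)
  rw [this]; ring_nf

lemma aux_mills (t : ℝ) (ht : 0 ≤ t) :
    t * Real.exp (-t ^ 2 / 2) / (t ^ 2 + 1) ≤ ∫ x in Set.Ioi t, Real.exp (-x ^ 2 / 2) := by
  set g : ℝ → ℝ := fun x => x * Real.exp (-x ^ 2 / 2) / (x ^ 2 + 1) with hg
  set g' : ℝ → ℝ := fun x => Real.exp (-x ^ 2 / 2) * ((1 - 2*x^2 - x^4) / (x ^ 2 + 1) ^ 2)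
    with hg'
  have hd : ∀ x ∈ Set.Ici t, HasDerivAt g (g' x) x := by
    intro x _
    have hx1 : (0:ℝ) < x ^ 2 + 1 := by positivity
    have hnum : HasDerivAt (fun y : ℝ => y * Real.exp (-y ^ 2 / 2))
        (1 * Real.exp (-x ^ 2 / 2) + x * (Real.exp (-x ^ 2 / 2) * (-(2 * x ^ 1) / 2))) x := by
      exact (hasDerivAt_id x).mul (((hasDerivAt_pow 2 x).neg.div_const 2).exp)
    have hden : HasDerivAt (fun y : ℝ => y ^ 2 + 1) (2 * x ^ 1) x :=
      (hasDerivAt_pow 2 x).add_const 1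
    have h := hnum.div hden hx1.ne'
    have hne : (x ^ 2 + 1 : ℝ) ≠ 0 := hx1.ne'
    refine h.congr_deriv ?_
    rw [hg', ← mul_div_assoc]
    congr 1
    ring
  have hg'cont : Continuous g' := by
    apply Continuous.mul
    · exact Real.continuous_exp.comp (by continuity)
    · exact Continuous.div (by continuity) (by continuity) (fun x => by positivity)
  have hIg' : IntegrableOn g' (Set.Ioi t) := by
    refine Integrable.mono (aux_integrable_exp t)
      (hg'cont.aestronglyMeasurable.restrict) (ae_of_all _ fun x => ?_)
    simp only [hg', Real.norm_eq_abs, abs_mul]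
    rw [Real.abs_exp]
    have h1 : |(1 - 2*x^2 - x^4) / (x ^ 2 + 1) ^ 2| ≤ 1 := by
      rw [abs_div, abs_of_pos (by positivity : (0:ℝ) < (x ^ 2 + 1) ^ 2)]
      rw [div_le_one (by positivity)]
      apply abs_le.mpr
      constructor <;> nlinarith [sq_nonneg (x^2), sq_nonneg x]
    calc Real.exp (-x ^ 2 / 2) * |(1 - 2*x^2 - x^4) / (x ^ 2 + 1) ^ 2|
        ≤ Real.exp (-x ^ 2 / 2) * 1 := by
          exact mul_le_mul_of_nonneg_left h1 (Real.exp_nonneg _)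
      _ = Real.exp (-x ^ 2 / 2) := mul_one _
  have htend : Tendsto g atTop (nhds 0) := by
    apply tendsto_of_tendsto_of_tendsto_of_le_of_le' tendsto_const_nhds aux_tendsto_exp
    · filter_upwards [eventually_ge_atTop (0:ℝ)] with x hx
      have : (0:ℝ) < x ^ 2 + 1 := by positivity
      positivity
    · filter_upwards with x
      have hx1 : (0:ℝ) < x ^ 2 + 1 := by positivity
      rw [hg, div_le_iff₀ hx1]
      have h2 : x ≤ x ^ 2 + 1 := by nlinarith [sq_nonneg (x - 1)]
      nlinarith [Real.exp_pos (-x ^ 2 / 2), Real.exp_nonneg (-x^2/2)]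
  have hFTC := integral_Ioi_of_hasDerivAt_of_tendsto' hd hIg' htend
  have hmono : ∫ x in Set.Ioi t, -g' x ≤ ∫ x in Set.Ioi t, Real.exp (-x ^ 2 / 2) := by
    refine setIntegral_mono_on hIg'.neg (aux_integrable_exp t) measurableSet_Ioi fun x _ => ?_
    have hx1 : (0:ℝ) < x ^ 2 + 1 := by positivity
    simp only [hg']
    have hkey : -(Real.exp (-x ^ 2 / 2) * ((1 - 2*x^2 - x^4) / (x ^ 2 + 1) ^ 2))
        = Real.exp (-x ^ 2 / 2) * ((x^4 + 2*x^2 - 1) / (x ^ 2 + 1) ^ 2) := by ring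
    rw [hkey]
    calc Real.exp (-x ^ 2 / 2) * ((x^4 + 2*x^2 - 1) / (x ^ 2 + 1) ^ 2)
        ≤ Real.exp (-x ^ 2 / 2) * 1 := by
          refine mul_le_mul_of_nonneg_left ?_ (Real.exp_nonneg _)
          rw [div_le_one (by positivity)]
          nlinarith [sq_nonneg x, sq_nonneg (x^2)]
      _ = Real.exp (-x ^ 2 / 2) := mul_one _
  have hint_neg : ∫ x in Set.Ioi t, -g' x = g t := by
    rw [integral_neg, hFTC]; ring
  rw [hint_neg] at hmono
  simpa [hg] using hmono

/-- For `Z ~ N(0,1)` and `t ≥ 0`,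
`E[(|Z| - t)₊] ≤ 2 exp(-t²/2) / (√(2π) (t² + 1))`. -/
theorem gaussian_positive_part_first_moment_bound (t : ℝ) (ht : 0 ≤ t) :
    (∫ x, max (|x| - t) 0 ∂(gaussianReal 0 1)) ≤
      2 * Real.exp (-t ^ 2 / 2) / (Real.sqrt (2 * Real.pi) * (t ^ 2 + 1)) := by
  have hs : (0:ℝ) < Real.sqrt (2 * Real.pi) := Real.sqrt_pos.mpr (by positivity)
  -- Step 1: rewrite as a Lebesgue integral against the density
  have hmeas : Measurable fun x : ℝ => (gaussianPDFReal 0 1 x).toNNReal :=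
    (measurable_gaussianPDFReal 0 1).real_toNNReal
  have step1 : (∫ x, max (|x| - t) 0 ∂(gaussianReal 0 1))
      = ∫ x, gaussianPDFReal 0 1 x * max (|x| - t) 0 := by
    rw [gaussianReal_of_var_ne_zero 0 one_ne_zero]
    have : gaussianPDF 0 1 = fun x => ((gaussianPDFReal 0 1 x).toNNReal : ENNReal) := by
      funext x; rfl
    rw [this, integral_withDensity_eq_integral_smul hmeas]
    congr 1
    funext x
    rw [NNReal.smul_def, smul_eq_mul, Real.coe_toNNReal _ (gaussianPDFReal_nonneg 0 1 x)]
  have hpdf : ∀ x : ℝ, gaussianPDFReal 0 1 x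
      = (Real.sqrt (2 * Real.pi))⁻¹ * Real.exp (-x ^ 2 / 2) := by
    intro x
    simp [gaussianPDFReal]
  have step2 : (∫ x, gaussianPDFReal 0 1 x * max (|x| - t) 0)
      = (Real.sqrt (2 * Real.pi))⁻¹ * ∫ x, max (|x| - t) 0 * Real.exp (-x ^ 2 / 2) := by
    rw [← integral_const_mul]
    congr 1
    funext x
    rw [hpdf x]
    ring
  -- Step 2: fold in |x| and use evenness
  set F : ℝ → ℝ := fun y => max (y - t) 0 * Real.exp (-y ^ 2 / 2) with hF
  have step3 : (∫ x, max (|x| - t) 0 * Real.exp (-x ^ 2 / 2))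
      = 2 * ∫ x in Set.Ioi (0:ℝ), F x := by
    rw [← integral_comp_abs (f := F)]
    congr 1
    funext x
    rw [hF]
    simp [sq_abs]
  -- Step 3: restrict to Ioi t
  have step4 : (∫ x in Set.Ioi (0:ℝ), F x) = ∫ x in Set.Ioi t, F x := by
    rcases eq_or_lt_of_le ht with h | h
    · rw [← h]
    · refine setIntegral_eq_of_subset_of_forall_diff_eq_zero measurableSet_Ioi
        (fun x hx => lt_trans h hx) fun x hx => ?_
      simp only [Set.mem_diff, Set.mem_Ioi, not_lt] at hx
      rw [hF]
      simp only
      rw [max_eq_right (by linarith [hx.2]), zero_mul]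
  have step5 : (∫ x in Set.Ioi t, F x)
      = Real.exp (-t ^ 2 / 2) - t * ∫ x in Set.Ioi t, Real.exp (-x ^ 2 / 2) := by
    have hcongr : ∫ x in Set.Ioi t, F x
        = ∫ x in Set.Ioi t,
            (x * Real.exp (-x ^ 2 / 2) - t * Real.exp (-x ^ 2 / 2)) := by
      refine setIntegral_congr_fun measurableSet_Ioi fun x hx => ?_
      rw [hF]
      simp only
      rw [max_eq_left (by simp only [Set.mem_Ioi] at hx; linarith)]
      ring
    rw [hcongr, integral_sub (aux_integrable_mul_exp t)
      ((aux_integrable_exp t).const_mul t), aux_tail_mul_exp t, integral_const_mul]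
  -- Combine
  rw [step1, step2, step3, step4, step5]
  set Q := ∫ x in Set.Ioi t, Real.exp (-x ^ 2 / 2) with hQ
  set E := Real.exp (-t ^ 2 / 2) with hE
  have hmills : t * E / (t ^ 2 + 1) ≤ Q := aux_mills t ht
  have hE0 : 0 < E := Real.exp_pos _
  have ht2 : (0:ℝ) < t ^ 2 + 1 := by positivity
  have key : E - t * Q ≤ E / (t ^ 2 + 1) := by
    have h1 : t * (t * E / (t ^ 2 + 1)) ≤ t * Q := mul_le_mul_of_nonneg_left hmills ht
    have h2 : t * (t * E / (t ^ 2 + 1)) = t ^ 2 * E / (t ^ 2 + 1) := by ring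
    have h3 : E - t ^ 2 * E / (t ^ 2 + 1) = E / (t ^ 2 + 1) := by
      field_simp
      ring
    linarith [h1, h2 ▸ h1]
  calc (Real.sqrt (2 * Real.pi))⁻¹ * (2 * (E - t * Q))
      ≤ (Real.sqrt (2 * Real.pi))⁻¹ * (2 * (E / (t ^ 2 + 1))) := by
        apply mul_le_mul_of_nonneg_left _ (by positivity)
        linarith
    _ = 2 * E / (Real.sqrt (2 * Real.pi) * (t ^ 2 + 1)) := by
        rw [eq_div_iff (by positivity)]
        field_simp
end

section
/- Let Z be a standard normal random variable. Then for every t ≥ 0, E[(|Z| - t)₊²] ≤ 4 exp(-t²/2) / ((t² + 2) √(2π t² + 4)). -/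
open MeasureTheory ProbabilityTheory Real Set Filter Topology
open scoped NNReal ENNReal

/-- tail integral of the (unnormalized) Gaussian -/
noncomputable def gE (t : ℝ) : ℝ := ∫ x in Set.Ioi t, Real.exp (-x ^ 2 / 2)

noncomputable def gB (t : ℝ) : ℝ :=
  Real.exp (-t ^ 2 / 2) * (t + 2 / ((t ^ 2 + 2) * Real.sqrt (t ^ 2 + 2 / π))) / (1 + t ^ 2)

noncomputable def gW (t : ℝ) : ℝ := gB t - gE t

noncomputable def Qp (u : ℝ) : ℝ :=
  (u + 3) * (u + 2) * (u + 2 / π) + 2 * (1 + u) * (u + 2 / π) + (1 + u) * (u + 2)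

noncomputable def Dp (u : ℝ) : ℝ := u * Qp u ^ 2 - (u + 2) ^ 4 * (u + 2 / π) ^ 3

lemma gauss_integrable : Integrable (fun x : ℝ => Real.exp (-x ^ 2 / 2)) := by
  have h := integrable_exp_neg_mul_sq (by norm_num : (0:ℝ) < 1/2)
  refine h.congr ?_
  filter_upwards with x
  ring_nf

lemma gauss_quarter_integrable : Integrable (fun x : ℝ => Real.exp (-x ^ 2 / 4)) := by
  have h := integrable_exp_neg_mul_sq (by norm_num : (0:ℝ) < 1/4)
  refine h.congr ?_
  filter_upwards with x
  ring_nf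

lemma sq_gauss_integrable (t : ℝ) :
    Integrable (fun x : ℝ => (x - t) ^ 2 * Real.exp (-x ^ 2 / 2)) := by
  have hbd : ∀ x : ℝ,
      ‖(x - t) ^ 2 * Real.exp (-x ^ 2 / 2)‖ ≤ 8 * Real.exp (-x ^ 2 / 4)
        + 2 * t ^ 2 * Real.exp (-x ^ 2 / 2) := by
    intro x
    have h1 : (x - t) ^ 2 ≤ 2 * x ^ 2 + 2 * t ^ 2 := by nlinarith [sq_nonneg (x + t)]
    have h2 : x ^ 2 * Real.exp (-x ^ 2 / 2) ≤ 4 * Real.exp (-x ^ 2 / 4) := by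
      have := Real.add_one_le_exp (x ^ 2 / 4)
      have he : Real.exp (-x ^ 2 / 2) = Real.exp (-x ^ 2 / 4) / Real.exp (x ^ 2 / 4) := by
        rw [← Real.exp_sub]; ring_nf
      have hB : (0:ℝ) < Real.exp (x ^ 2 / 4) := Real.exp_pos _
      rw [he, show x ^ 2 * (Real.exp (-x ^ 2 / 4) / Real.exp (x ^ 2 / 4))
        = (x ^ 2 * Real.exp (-x ^ 2 / 4)) / Real.exp (x ^ 2 / 4) by ring,
        div_le_iff₀ hB]
      nlinarith [Real.exp_pos (-x ^ 2 / 4), sq_nonneg x]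
    have hexp : (0:ℝ) < Real.exp (-x ^ 2 / 2) := Real.exp_pos _
    rw [norm_mul, norm_pow, Real.norm_eq_abs, Real.norm_eq_abs,
      Real.abs_exp, sq_abs]
    nlinarith [Real.exp_pos (-x^2/4)]
  refine Integrable.mono' ((gauss_quarter_integrable.const_mul 8).add
    ((gauss_integrable.const_mul (2 * t ^ 2)))) ?_ (Filter.Eventually.of_forall hbd)
  exact (Continuous.mul (by continuity) (by continuity)).aestronglyMeasurable

lemma gE_eq (x : ℝ) : gE x = gE 0 - ∫ y in (0:ℝ)..x, Real.exp (-y ^ 2 / 2) := by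
  have hint := gauss_integrable
  have h1 : gE 0 - gE x = ∫ y in (0:ℝ)..x, Real.exp (-y ^ 2 / 2) := by
    have hIic : ∀ a : ℝ, (∫ y in Iic a, Real.exp (-y ^ 2 / 2))
        + gE a = ∫ y, Real.exp (-y ^ 2 / 2) :=
      fun a => intervalIntegral.integral_Iic_add_Ioi hint.integrableOn hint.integrableOn
    have := intervalIntegral.integral_Iic_sub_Iic (a := (0:ℝ)) (b := x)
      (hint.integrableOn) (hint.integrableOn)
    have h0 := hIic 0
    have hx := hIic x
    linarith [this]
  linarith

lemma gE_hasDeriv (t : ℝ) : HasDerivAt gE (-Real.exp (-t ^ 2 / 2)) t := by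
  have hF : HasDerivAt (fun x => gE 0 - ∫ y in (0:ℝ)..x, Real.exp (-y ^ 2 / 2))
      (-Real.exp (-t ^ 2 / 2)) t := by
    have hD : HasDerivAt (fun x => ∫ y in (0:ℝ)..x, Real.exp (-y ^ 2 / 2))
        (Real.exp (-t ^ 2 / 2)) t := by
      have hc : Continuous fun y : ℝ => Real.exp (-y ^ 2 / 2) := by continuity
      exact intervalIntegral.integral_hasDerivAt_right
        gauss_integrable.intervalIntegrable
        hc.aestronglyMeasurable.stronglyMeasurableAtFilter hc.continuousAt
    simpa using hD.const_sub (gE 0)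
  exact hF.congr_of_eventuallyEq (Filter.Eventually.of_forall gE_eq)

lemma gE_nonneg (t : ℝ) : 0 ≤ gE t :=
  setIntegral_nonneg measurableSet_Ioi fun x _ => (Real.exp_pos _).le

lemma gE_le (t : ℝ) : gE t ≤ Real.exp (1/2) * Real.exp (-t) := by
  have hmono : ∀ x : ℝ, Real.exp (-x ^ 2 / 2) ≤ Real.exp (1/2) * Real.exp (-x) := by
    intro x
    rw [← Real.exp_add]
    apply Real.exp_le_exp.2
    nlinarith [sq_nonneg (x - 1)]
  have hintexp : IntegrableOn (fun x : ℝ => Real.exp (-x)) (Ioi t) := by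
    simpa using exp_neg_integrableOn_Ioi t (by norm_num : (0:ℝ) < 1)
  have h2 : gE t ≤ ∫ x in Ioi t, Real.exp (1/2) * Real.exp (-x) := by
    exact setIntegral_mono_on gauss_integrable.integrableOn (hintexp.const_mul _)
      measurableSet_Ioi fun x _ => hmono x
  calc gE t ≤ _ := h2
    _ = Real.exp (1/2) * Real.exp (-t) := by
        rw [MeasureTheory.integral_const_mul, integral_exp_neg_Ioi]

lemma gE_tendsto : Tendsto gE atTop (𝓝 0) := by
  refine tendsto_of_tendsto_of_tendsto_of_le_of_le tendsto_const_nhds ?_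
    (fun t => gE_nonneg t) (fun t => gE_le t)
  simpa using Real.tendsto_exp_neg_atTop_nhds_zero.const_mul (Real.exp (1/2))

lemma gE_zero : gE 0 = Real.sqrt (2 * π) / 2 := by
  have h := integral_gaussian_Ioi (1/2 : ℝ)
  have h2 : gE 0 = ∫ x in Ioi (0:ℝ), Real.exp (-(1/2) * x ^ 2) := by
    unfold gE
    congr 1
    ext x
    ring_nf
  rw [h2, h]
  rw [show (π / (1/2)) = 2 * π by ring]

lemma key_integral (t : ℝ) :
    (∫ x in Ioi t, (x - t) ^ 2 * Real.exp (-x ^ 2 / 2))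
      = (t ^ 2 + 1) * gE t - t * Real.exp (-t ^ 2 / 2) := by
  have hF : ∀ x : ℝ, HasDerivAt (fun y => (2*t - y) * Real.exp (-y^2/2) - (t^2+1) * gE y)
      ((x - t) ^ 2 * Real.exp (-x ^ 2 / 2)) x := by
    intro x
    have hinner : HasDerivAt (fun y : ℝ => -y^2/2) (-x) x := by
      refine HasDerivAt.congr_deriv ((show HasDerivAt (fun y : ℝ => y ^ 2) _ x from hasDerivAt_pow 2 x).neg.div_const 2) ?_
      ring
    have h1 : HasDerivAt (fun y : ℝ => Real.exp (-y^2/2)) ((-x) * Real.exp (-x^2/2)) x := by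
      simpa [mul_comm] using hinner.exp
    have h2 : HasDerivAt (fun y : ℝ => 2*t - y) (-1) x := by
      simpa using (hasDerivAt_id x).const_sub (2*t)
    have h5 := (h2.mul h1).sub ((gE_hasDeriv x).const_mul (t^2+1))
    refine HasDerivAt.congr_deriv h5 ?_
    ring
  have hT1 : Tendsto (fun y : ℝ => (2*t - y) * Real.exp (-y^2/2)) atTop (𝓝 0) := by
    have hg : Tendsto (fun y : ℝ =>
        Real.exp (1/2) * (y * Real.exp (-y)) + (2*|t|) * (Real.exp (1/2) * Real.exp (-y)))
        atTop (𝓝 0) := by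
      have g1 := (Real.tendsto_pow_mul_exp_neg_atTop_nhds_zero 1).const_mul (Real.exp (1/2))
      have g2 := (Real.tendsto_exp_neg_atTop_nhds_zero.const_mul (Real.exp (1/2))).const_mul (2*|t|)
      simpa using g1.add g2
    refine squeeze_zero_norm' ?_ hg
    filter_upwards [eventually_ge_atTop (0:ℝ)] with y hy
    have hb1 : |2*t - y| ≤ y + 2*|t| := by
      rw [abs_sub_comm]
      calc |y - 2*t| ≤ |y| + |2*t| := abs_sub _ _
        _ = y + 2*|t| := by rw [abs_of_nonneg hy, abs_mul]; norm_num
    have hb2 : Real.exp (-y^2/2) ≤ Real.exp (1/2) * Real.exp (-y) := by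
      rw [← Real.exp_add]
      apply Real.exp_le_exp.2
      nlinarith [sq_nonneg (y - 1)]
    have hy2 : (0:ℝ) ≤ y + 2*|t| := by positivity
    calc ‖(2*t - y) * Real.exp (-y^2/2)‖ = |2*t - y| * Real.exp (-y^2/2) := by
          rw [norm_mul, Real.norm_eq_abs, Real.norm_eq_abs, Real.abs_exp]
      _ ≤ (y + 2*|t|) * (Real.exp (1/2) * Real.exp (-y)) :=
          mul_le_mul hb1 hb2 (Real.exp_pos _).le hy2
      _ = Real.exp (1/2) * (y * Real.exp (-y)) + (2*|t|) * (Real.exp (1/2) * Real.exp (-y)) := by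
          ring
  have hT : Tendsto (fun y => (2*t - y) * Real.exp (-y^2/2) - (t^2+1) * gE y) atTop (𝓝 0) := by
    simpa using hT1.sub (gE_tendsto.const_mul (t^2+1))
  have hkey := integral_Ioi_of_hasDerivAt_of_tendsto' (a := t) (fun x _ => hF x)
    ((sq_gauss_integrable t).integrableOn) hT
  rw [hkey]
  ring

noncomputable def wd (t : ℝ) : ℝ :=
  Real.exp (-t ^ 2 / 2) * (2 * ((t ^ 2 + 2) ^ 2 * Real.sqrt (t ^ 2 + 2 / π) ^ 3
    - t * (t ^ 2 + 3) * (t ^ 2 + 2) * Real.sqrt (t ^ 2 + 2 / π) ^ 2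
    - t * (2 * Real.sqrt (t ^ 2 + 2 / π) ^ 2 + t ^ 2 + 2) * (1 + t ^ 2))
    / ((1 + t ^ 2) ^ 2 * (t ^ 2 + 2) ^ 2 * Real.sqrt (t ^ 2 + 2 / π) ^ 3))

set_option maxHeartbeats 1600000 in
lemma gW_hasDeriv (t : ℝ) : HasDerivAt gW (wd t) t := by
  have hπ : (0:ℝ) < π := Real.pi_pos
  set v := Real.sqrt (t ^ 2 + 2 / π) with hv
  have hvpos : 0 < v := Real.sqrt_pos.2 (by positivity)
  have h1 : HasDerivAt (fun x : ℝ => x ^ 2 + 2 / π) (2 * t) t := by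
    refine HasDerivAt.congr_deriv ((show HasDerivAt (fun y : ℝ => y ^ 2) _ t from hasDerivAt_pow 2 t).add_const (2 / π)) ?_
    norm_num
  have hsq : HasDerivAt (fun x : ℝ => Real.sqrt (x ^ 2 + 2 / π)) ((2 * t) / (2 * v)) t :=
    h1.sqrt (by positivity)
  have h2 : HasDerivAt (fun x : ℝ => x ^ 2 + 2) (2 * t) t := by
    refine HasDerivAt.congr_deriv ((show HasDerivAt (fun y : ℝ => y ^ 2) _ t from hasDerivAt_pow 2 t).add_const (2:ℝ)) ?_
    norm_num
  have hden : HasDerivAt (fun x : ℝ => (x ^ 2 + 2) * Real.sqrt (x ^ 2 + 2 / π))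
      ((2 * t) * v + (t ^ 2 + 2) * ((2 * t) / (2 * v))) t := h2.mul hsq
  have hdnz : (t ^ 2 + 2) * v ≠ 0 := by positivity
  have hnum : HasDerivAt (fun x : ℝ => x + 2 / ((x ^ 2 + 2) * Real.sqrt (x ^ 2 + 2 / π)))
      (1 + (0 * ((t ^ 2 + 2) * v) - 2 * ((2 * t) * v + (t ^ 2 + 2) * ((2 * t) / (2 * v))))
        / (((t ^ 2 + 2) * v) ^ 2)) t :=
    (hasDerivAt_id t).add ((hasDerivAt_const t (2:ℝ)).div hden hdnz)
  have hexp : HasDerivAt (fun x : ℝ => Real.exp (-x ^ 2 / 2)) ((-t) * Real.exp (-t ^ 2 / 2)) t := by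
    have hinner : HasDerivAt (fun y : ℝ => -y ^ 2 / 2) (-t) t := by
      refine HasDerivAt.congr_deriv ((show HasDerivAt (fun y : ℝ => y ^ 2) _ t from hasDerivAt_pow 2 t).neg.div_const 2) ?_
      ring
    simpa [mul_comm] using hinner.exp
  have h3 : HasDerivAt (fun x : ℝ => 1 + x ^ 2) (2 * t) t := by
    refine HasDerivAt.congr_deriv ((show HasDerivAt (fun y : ℝ => y ^ 2) _ t from hasDerivAt_pow 2 t).const_add (1:ℝ)) ?_
    norm_num
  have h3nz : (1 + t ^ 2) ≠ 0 := by positivity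
  have hB : HasDerivAt gB
      (((((-t) * Real.exp (-t ^ 2 / 2)) * (t + 2 / ((t ^ 2 + 2) * v))
        + Real.exp (-t ^ 2 / 2) * (1 + (0 * ((t ^ 2 + 2) * v)
          - 2 * ((2 * t) * v + (t ^ 2 + 2) * ((2 * t) / (2 * v)))) / (((t ^ 2 + 2) * v) ^ 2)))
        * (1 + t ^ 2)
        - (Real.exp (-t ^ 2 / 2) * (t + 2 / ((t ^ 2 + 2) * v))) * (2 * t)) / (1 + t ^ 2) ^ 2)
      t := (hexp.mul hnum).div h3 h3nz
  have hW := hB.sub (gE_hasDeriv t)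
  refine HasDerivAt.congr_deriv hW ?_
  unfold wd
  rw [← hv]
  have hexpnz : Real.exp (-t ^ 2 / 2) ≠ 0 := (Real.exp_pos _).ne'
  field_simp
  ring

lemma Dp_mono {x y : ℝ} (hx : 0 ≤ x) (hxy : x ≤ y) : Dp x ≤ Dp y := by
  have hπ : (0:ℝ) < π := Real.pi_pos
  have hπ4 : π ≤ 4 := Real.pi_le_four
  have hy : 0 ≤ y := hx.trans hxy
  set a := 2 / π with ha
  have ha0 : 0 < a := by positivity
  have ha1 : a < 1 := by
    rw [ha, div_lt_one hπ]
    linarith [Real.pi_gt_three]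
  have hfac : Dp y - Dp x = (y - x) * ((4 + 32*a + 16*a^2 - 32*a^3)
      + (44 + 156*a + 16*a^2 - 24*a^3) * (y + x)
      + (137 + 190*a - 7*a^2 - 8*a^3) * (y^2 + y*x + x^2)
      + (148 + 78*a - 10*a^2 - a^3) * (y^3 + y^2*x + y*x^2 + x^3)
      + (62 + 6*a - 2*a^2) * (y^4 + y^3*x + y^2*x^2 + y*x^3 + x^4)
      + (8 - a) * (y^5 + y^4*x + y^3*x^2 + y^2*x^3 + y*x^4 + x^5)) := by
    unfold Dp Qp
    rw [← ha]
    ring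
  have hc1 : 0 ≤ 4 + 32*a + 16*a^2 - 32*a^3 := by nlinarith
  have hc2 : 0 ≤ 44 + 156*a + 16*a^2 - 24*a^3 := by nlinarith
  have hc3 : 0 ≤ 137 + 190*a - 7*a^2 - 8*a^3 := by nlinarith
  have hc4 : 0 ≤ 148 + 78*a - 10*a^2 - a^3 := by nlinarith
  have hc5 : 0 ≤ 62 + 6*a - 2*a^2 := by nlinarith
  have hc6 : 0 ≤ 8 - a := by nlinarith
  have hm1 : 0 ≤ y + x := by linarith
  have hm2 : 0 ≤ y^2 + y*x + x^2 :=
    add_nonneg (add_nonneg (pow_nonneg hy 2) (mul_nonneg hy hx)) (pow_nonneg hx 2)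
  have hm3 : 0 ≤ y^3 + y^2*x + y*x^2 + x^3 :=
    add_nonneg (add_nonneg (add_nonneg (pow_nonneg hy 3)
      (mul_nonneg (pow_nonneg hy 2) hx)) (mul_nonneg hy (pow_nonneg hx 2))) (pow_nonneg hx 3)
  have hm4 : 0 ≤ y^4 + y^3*x + y^2*x^2 + y*x^3 + x^4 :=
    add_nonneg (add_nonneg (add_nonneg (add_nonneg (pow_nonneg hy 4)
      (mul_nonneg (pow_nonneg hy 3) hx)) (mul_nonneg (pow_nonneg hy 2) (pow_nonneg hx 2)))
      (mul_nonneg hy (pow_nonneg hx 3))) (pow_nonneg hx 4)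
  have hm5 : 0 ≤ y^5 + y^4*x + y^3*x^2 + y^2*x^3 + y*x^4 + x^5 :=
    add_nonneg (add_nonneg (add_nonneg (add_nonneg (add_nonneg (pow_nonneg hy 5)
      (mul_nonneg (pow_nonneg hy 4) hx)) (mul_nonneg (pow_nonneg hy 3) (pow_nonneg hx 2)))
      (mul_nonneg (pow_nonneg hy 2) (pow_nonneg hx 3)))
      (mul_nonneg hy (pow_nonneg hx 4))) (pow_nonneg hx 5)
  have hs : 0 ≤ (4 + 32*a + 16*a^2 - 32*a^3)
      + (44 + 156*a + 16*a^2 - 24*a^3) * (y + x)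
      + (137 + 190*a - 7*a^2 - 8*a^3) * (y^2 + y*x + x^2)
      + (148 + 78*a - 10*a^2 - a^3) * (y^3 + y^2*x + y*x^2 + x^3)
      + (62 + 6*a - 2*a^2) * (y^4 + y^3*x + y^2*x^2 + y*x^3 + x^4)
      + (8 - a) * (y^5 + y^4*x + y^3*x^2 + y^2*x^3 + y*x^4 + x^5) := by
    have p1 := mul_nonneg hc2 hm1
    have p2 := mul_nonneg hc3 hm2
    have p3 := mul_nonneg hc4 hm3
    have p4 := mul_nonneg hc5 hm4
    have p5 := mul_nonneg hc6 hm5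
    linarith
  have hfin := mul_nonneg (sub_nonneg.2 hxy) hs
  linarith [hfac]

lemma Dp_one_nonneg : 0 ≤ Dp 1 := by
  have hπ : (0:ℝ) < π := Real.pi_pos
  have hπ4 : π ≤ 4 := Real.pi_le_four
  set a := 2 / π with ha
  have ha0 : 0 < a := by positivity
  have ha1 : a < 1 := by
    rw [ha, div_lt_one hπ]
    linarith [Real.pi_gt_three]
  have h : Dp 1 = 403 + 461*a + 13*a^2 - 81*a^3 := by
    unfold Dp Qp
    rw [← ha]
    ring
  rw [h]
  nlinarith

lemma Qp_pos (u : ℝ) (hu : 0 ≤ u) : 0 < Qp u := by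
  have hπ : (0:ℝ) < π := Real.pi_pos
  unfold Qp
  positivity

lemma wd_nonneg (t : ℝ) (htpos : 0 < t) (hD : Dp (t ^ 2) ≤ 0) : 0 ≤ wd t := by
  have hπ : (0:ℝ) < π := Real.pi_pos
  set v := Real.sqrt (t ^ 2 + 2 / π) with hv
  have hvpos : 0 < v := Real.sqrt_pos.2 (by positivity)
  have hv2 : v ^ 2 = t ^ 2 + 2 / π := Real.sq_sqrt (by positivity)
  have hQ : 0 < Qp (t ^ 2) := Qp_pos _ (by positivity)
  have hC : 0 < (t ^ 2 + 2) ^ 2 * (t ^ 2 + 2 / π) := by positivity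
  have h1 : (t * Qp (t ^ 2)) ^ 2 ≤ ((t ^ 2 + 2) ^ 2 * (t ^ 2 + 2 / π) * v) ^ 2 := by
    have he : ((t ^ 2 + 2) ^ 2 * (t ^ 2 + 2 / π) * v) ^ 2
        = (t ^ 2 + 2) ^ 4 * (t ^ 2 + 2 / π) ^ 3 := by
      rw [mul_pow, mul_pow, hv2]
      ring
    rw [he]
    unfold Dp at hD
    nlinarith [hD]
  have h2 : t * Qp (t ^ 2) ≤ (t ^ 2 + 2) ^ 2 * (t ^ 2 + 2 / π) * v := by
    nlinarith [h1, mul_nonneg htpos.le hQ.le, mul_pos hC hvpos]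
  have hK : (t ^ 2 + 2) ^ 2 * v ^ 3 - t * (t ^ 2 + 3) * (t ^ 2 + 2) * v ^ 2
      - t * (2 * v ^ 2 + t ^ 2 + 2) * (1 + t ^ 2)
      = (t ^ 2 + 2) ^ 2 * (t ^ 2 + 2 / π) * v - t * Qp (t ^ 2) := by
    unfold Qp
    linear_combination ((t ^ 2 + 2) ^ 2 * v - t * (t ^ 2 + 3) * (t ^ 2 + 2)
      - 2 * t * (1 + t ^ 2)) * hv2
  have hMpos : (0:ℝ) < (1 + t ^ 2) ^ 2 * (t ^ 2 + 2) ^ 2 * v ^ 3 := by positivity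
  unfold wd
  rw [← hv]
  exact mul_nonneg (Real.exp_pos _).le (div_nonneg (by nlinarith [hK, h2]) hMpos.le)

lemma wd_nonpos (t : ℝ) (htpos : 0 < t) (hD : 0 ≤ Dp (t ^ 2)) : wd t ≤ 0 := by
  have hπ : (0:ℝ) < π := Real.pi_pos
  set v := Real.sqrt (t ^ 2 + 2 / π) with hv
  have hvpos : 0 < v := Real.sqrt_pos.2 (by positivity)
  have hv2 : v ^ 2 = t ^ 2 + 2 / π := Real.sq_sqrt (by positivity)
  have hQ : 0 < Qp (t ^ 2) := Qp_pos _ (by positivity)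
  have hC : 0 < (t ^ 2 + 2) ^ 2 * (t ^ 2 + 2 / π) := by positivity
  have h1 : ((t ^ 2 + 2) ^ 2 * (t ^ 2 + 2 / π) * v) ^ 2 ≤ (t * Qp (t ^ 2)) ^ 2 := by
    have he : ((t ^ 2 + 2) ^ 2 * (t ^ 2 + 2 / π) * v) ^ 2
        = (t ^ 2 + 2) ^ 4 * (t ^ 2 + 2 / π) ^ 3 := by
      rw [mul_pow, mul_pow, hv2]
      ring
    rw [he]
    unfold Dp at hD
    nlinarith [hD]
  have h2 : (t ^ 2 + 2) ^ 2 * (t ^ 2 + 2 / π) * v ≤ t * Qp (t ^ 2) := by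
    nlinarith [h1, mul_nonneg htpos.le hQ.le, mul_pos hC hvpos]
  have hK : (t ^ 2 + 2) ^ 2 * v ^ 3 - t * (t ^ 2 + 3) * (t ^ 2 + 2) * v ^ 2
      - t * (2 * v ^ 2 + t ^ 2 + 2) * (1 + t ^ 2)
      = (t ^ 2 + 2) ^ 2 * (t ^ 2 + 2 / π) * v - t * Qp (t ^ 2) := by
    unfold Qp
    linear_combination ((t ^ 2 + 2) ^ 2 * v - t * (t ^ 2 + 3) * (t ^ 2 + 2)
      - 2 * t * (1 + t ^ 2)) * hv2
  have hMpos : (0:ℝ) < (1 + t ^ 2) ^ 2 * (t ^ 2 + 2) ^ 2 * v ^ 3 := by positivity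
  have hdiv : (2 * ((t ^ 2 + 2) ^ 2 * v ^ 3 - t * (t ^ 2 + 3) * (t ^ 2 + 2) * v ^ 2
      - t * (2 * v ^ 2 + t ^ 2 + 2) * (1 + t ^ 2)))
      / ((1 + t ^ 2) ^ 2 * (t ^ 2 + 2) ^ 2 * v ^ 3) ≤ 0 := by
    apply div_nonpos_of_nonpos_of_nonneg _ hMpos.le
    nlinarith [hK, h2]
  unfold wd
  rw [← hv]
  exact mul_nonpos_of_nonneg_of_nonpos (Real.exp_pos _).le hdiv

lemma gW_zero : gW 0 = 0 := by
  have hπ : (0:ℝ) < π := Real.pi_pos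
  have h : Real.sqrt (2 / π) * Real.sqrt (2 * π) = 2 := by
    rw [← Real.sqrt_mul (by positivity)]
    rw [show (2 / π) * (2 * π) = 2 ^ 2 by field_simp]
    exact Real.sqrt_sq (by norm_num)
  have hvpos : 0 < Real.sqrt (2 / π) := Real.sqrt_pos.2 (by positivity)
  have h2πpos : 0 < Real.sqrt (2 * π) := Real.sqrt_pos.2 (by positivity)
  unfold gW gB
  rw [gE_zero, show (0:ℝ) ^ 2 + 2 / π = 2 / π by norm_num]
  rw [show Real.exp (-(0:ℝ) ^ 2 / 2) = 1 by norm_num]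
  have key : Real.sqrt (2 / π) = 2 / Real.sqrt (2 * π) := by
    rw [eq_div_iff h2πpos.ne']
    exact h
  rw [key]
  field_simp
  ring

lemma gB_nonneg (t : ℝ) (ht : 0 ≤ t) : 0 ≤ gB t := by
  have hπ : (0:ℝ) < π := Real.pi_pos
  unfold gB
  have hvpos : 0 < Real.sqrt (t ^ 2 + 2 / π) := Real.sqrt_pos.2 (by positivity)
  positivity

lemma gB_le (t : ℝ) (ht : 0 ≤ t) : gB t ≤ Real.exp (1/2) * ((t + 2) * Real.exp (-t)) := by
  have hπ : (0:ℝ) < π := Real.pi_pos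
  have hπ4 : π ≤ 4 := Real.pi_le_four
  have hvpos : 0 < Real.sqrt (t ^ 2 + 2 / π) := Real.sqrt_pos.2 (by positivity)
  have hs : 2 / ((t ^ 2 + 2) * Real.sqrt (t ^ 2 + 2 / π)) ≤ 2 := by
    rw [div_le_iff₀ (by positivity)]
    have hx2 : (1/2:ℝ) ≤ t ^ 2 + 2 / π := by
      have : (1/2:ℝ) ≤ 2 / π := by
        rw [le_div_iff₀ hπ]
        linarith
      nlinarith [sq_nonneg t]
    have hvhalf : (1/2:ℝ) ≤ Real.sqrt (t ^ 2 + 2 / π) := by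
      nlinarith [Real.sq_sqrt (by positivity : (0:ℝ) ≤ t ^ 2 + 2 / π), hvpos.le]
    nlinarith [sq_nonneg t, hvhalf]
  have hexpb : Real.exp (-t ^ 2 / 2) ≤ Real.exp (1/2) * Real.exp (-t) := by
    rw [← Real.exp_add]
    apply Real.exp_le_exp.2
    nlinarith [sq_nonneg (t - 1)]
  have hfrac : (1:ℝ) / (1 + t ^ 2) ≤ 1 := by
    rw [div_le_one (by positivity)]
    nlinarith
  unfold gB
  have hnum : 0 ≤ t + 2 / ((t ^ 2 + 2) * Real.sqrt (t ^ 2 + 2 / π)) := by positivity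
  calc Real.exp (-t ^ 2 / 2) * (t + 2 / ((t ^ 2 + 2) * Real.sqrt (t ^ 2 + 2 / π))) / (1 + t ^ 2)
      ≤ Real.exp (-t ^ 2 / 2) * (t + 2) / 1 := by
        apply div_le_div₀ (by positivity) _ (by norm_num) (by nlinarith)
        apply mul_le_mul_of_nonneg_left _ (Real.exp_pos _).le
        linarith [hs]
    _ = Real.exp (-t ^ 2 / 2) * (t + 2) := by ring
    _ ≤ (Real.exp (1/2) * Real.exp (-t)) * (t + 2) :=
        mul_le_mul_of_nonneg_right hexpb (by linarith)
    _ = Real.exp (1/2) * ((t + 2) * Real.exp (-t)) := by ring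

lemma gW_tendsto : Tendsto gW atTop (𝓝 0) := by
  have hB : Tendsto gB atTop (𝓝 0) := by
    have hg : Tendsto (fun t : ℝ => Real.exp (1/2) * ((t + 2) * Real.exp (-t))) atTop (𝓝 0) := by
      have g1 := Real.tendsto_pow_mul_exp_neg_atTop_nhds_zero 1
      have g2 := Real.tendsto_exp_neg_atTop_nhds_zero.const_mul (2:ℝ)
      have := (g1.add g2).const_mul (Real.exp (1/2))
      simp only [pow_one, mul_zero, add_zero, zero_add] at this
      refine this.congr fun x => ?_
      ring
    refine tendsto_of_tendsto_of_tendsto_of_le_of_le' tendsto_const_nhds hg ?_ ?_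
    · filter_upwards [eventually_ge_atTop (0:ℝ)] with s hs using gB_nonneg s hs
    · filter_upwards [eventually_ge_atTop (0:ℝ)] with s hs using gB_le s hs
  have := hB.sub gE_tendsto
  exact (by simpa using this : Tendsto (fun x => gB x - gE x) atTop (𝓝 0))

lemma gE_le_gB (t : ℝ) (ht : 0 ≤ t) : gE t ≤ gB t := by
  suffices h : 0 ≤ gW t by
    unfold gW at h
    linarith
  have hcontW : Continuous gW :=
    continuous_iff_continuousAt.2 fun x => (gW_hasDeriv x).continuousAt
  set S : Set ℝ := {s : ℝ | 0 ≤ s ∧ 0 ≤ Dp (s ^ 2)} with hS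
  have hSne : S.Nonempty := ⟨1, by norm_num, by simpa using Dp_one_nonneg⟩
  have hSbd : BddBelow S := ⟨0, fun s hs => hs.1⟩
  set t₀ := sInf S with ht₀
  have ht₀0 : 0 ≤ t₀ := le_csInf hSne fun s hs => hs.1
  have hbelow : ∀ s : ℝ, 0 < s → s < t₀ → Dp (s ^ 2) ≤ 0 := by
    intro s hs hst
    by_contra hcon
    push_neg at hcon
    exact absurd (csInf_le hSbd ⟨hs.le, hcon.le⟩) (not_le.2 hst)
  have habove : ∀ s : ℝ, t₀ < s → 0 ≤ Dp (s ^ 2) := by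
    intro s hst
    obtain ⟨r, hrS, hrs⟩ := exists_lt_of_csInf_lt hSne hst
    refine hrS.2.trans (Dp_mono (by positivity) ?_)
    nlinarith [hrS.1]
  have hmono : MonotoneOn gW (Icc 0 t₀) := by
    apply monotoneOn_of_deriv_nonneg (convex_Icc 0 t₀) hcontW.continuousOn
    · intro x _
      exact (gW_hasDeriv x).differentiableAt.differentiableWithinAt
    · intro x hx
      rw [interior_Icc] at hx
      rw [(gW_hasDeriv x).deriv]
      exact wd_nonneg x hx.1 (hbelow x hx.1 hx.2)
  have hanti : AntitoneOn gW (Ici t₀) := by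
    apply antitoneOn_of_deriv_nonpos (convex_Ici t₀) hcontW.continuousOn
    · intro x _
      exact (gW_hasDeriv x).differentiableAt.differentiableWithinAt
    · intro x hx
      rw [interior_Ici] at hx
      rw [(gW_hasDeriv x).deriv]
      exact wd_nonpos x (lt_of_le_of_lt ht₀0 hx) (habove x hx)
  rcases le_total t t₀ with hc | hc
  · have h0 := hmono ⟨le_refl 0, ht₀0⟩ ⟨ht, hc⟩ ht
    rw [gW_zero] at h0
    exact h0
  · refine le_of_tendsto gW_tendsto ?_
    filter_upwards [eventually_ge_atTop t] with s hs
    exact hanti (mem_Ici.2 hc) (mem_Ici.2 (hc.trans hs)) hs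

lemma reduce (t : ℝ) (ht : 0 ≤ t) :
    (∫ x, (max (|x| - t) 0) ^ 2 ∂(gaussianReal 0 1))
      = (Real.sqrt (2 * π))⁻¹ * (2 * ∫ x in Ioi t, (x - t) ^ 2 * Real.exp (-x ^ 2 / 2)) := by
  set F : ℝ → ℝ := fun y => (max (y - t) 0) ^ 2 * Real.exp (-y ^ 2 / 2) with hF
  have hFcont : Continuous F := by
    apply Continuous.mul
    · exact ((continuous_id.sub continuous_const).max continuous_const).pow 2
    · continuity
  have hFint : Integrable F := by
    refine Integrable.mono' (sq_gauss_integrable t) hFcont.aestronglyMeasurable ?_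
    filter_upwards with y
    have h1 : |max (y - t) 0| ≤ |y - t| := by
      rcases le_or_gt (y - t) 0 with h | h
      · simp [max_eq_right h, abs_nonpos_iff]
      · rw [max_eq_left h.le]
    have h2 : (max (y - t) 0) ^ 2 ≤ (y - t) ^ 2 := by
      rw [← sq_abs (max (y - t) 0), ← sq_abs (y - t)]
      exact pow_le_pow_left₀ (abs_nonneg _) h1 2
    rw [hF, Real.norm_eq_abs, abs_mul, Real.abs_exp,
      abs_of_nonneg (by positivity : (0:ℝ) ≤ (max (y - t) 0) ^ 2)]
    exact mul_le_mul_of_nonneg_right h2 (Real.exp_pos _).le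
  have hpdf : ∀ x : ℝ, gaussianPDFReal 0 1 x = (Real.sqrt (2 * π))⁻¹ * Real.exp (-x ^ 2 / 2) := by
    intro x
    unfold gaussianPDFReal
    norm_num
  have step1 : (∫ x, (max (|x| - t) 0) ^ 2 ∂(gaussianReal 0 1))
      = ∫ x, gaussianPDFReal 0 1 x * (max (|x| - t) 0) ^ 2 := by
    rw [gaussianReal_of_var_ne_zero 0 one_ne_zero]
    have hwd : (gaussianPDF 0 1) = fun x => ((gaussianPDFReal 0 1 x).toNNReal : ℝ≥0∞) := rfl
    rw [hwd, integral_withDensity_eq_integral_smul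
      ((measurable_gaussianPDFReal 0 1).real_toNNReal)]
    congr 1
    ext x
    rw [NNReal.smul_def, smul_eq_mul, Real.coe_toNNReal _ (gaussianPDFReal_nonneg 0 1 x)]
  have hsplit : (∫ x in Ioi (0:ℝ), F x) = ∫ x in Ioi t, (x - t) ^ 2 * Real.exp (-x ^ 2 / 2) := by
    have hunion : Ioc 0 t ∪ Ioi t = Ioi (0:ℝ) := Ioc_union_Ioi_eq_Ioi ht
    rw [← hunion, setIntegral_union (Ioc_disjoint_Ioi le_rfl) measurableSet_Ioi
      hFint.integrableOn hFint.integrableOn]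
    have h1 : (∫ x in Ioc (0:ℝ) t, F x) = 0 := by
      have heq : EqOn F (fun _ => 0) (Ioc (0:ℝ) t) := by
        intro x hx
        have : max (x - t) 0 = 0 := max_eq_right (sub_nonpos.2 hx.2)
        simp [hF, this]
      rw [setIntegral_congr_fun measurableSet_Ioc heq, integral_zero]
    have h2 : (∫ x in Ioi t, F x) = ∫ x in Ioi t, (x - t) ^ 2 * Real.exp (-x ^ 2 / 2) := by
      refine setIntegral_congr_fun measurableSet_Ioi fun x hx => ?_
      have : max (x - t) 0 = x - t := max_eq_left (by linarith [hx.out] : (0:ℝ) ≤ x - t)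
      simp [hF, this]
    rw [h1, h2, zero_add]
  rw [step1]
  calc (∫ x, gaussianPDFReal 0 1 x * (max (|x| - t) 0) ^ 2)
      = ∫ x, (Real.sqrt (2 * π))⁻¹ * F |x| := by
        congr 1
        ext x
        rw [hpdf x]
        simp only [hF]
        rw [sq_abs]
        ring
    _ = (Real.sqrt (2 * π))⁻¹ * ∫ x, F |x| := MeasureTheory.integral_const_mul _ _
    _ = (Real.sqrt (2 * π))⁻¹ * (2 * ∫ x in Ioi (0:ℝ), F x) := by rw [integral_comp_abs]
    _ = _ := by rw [hsplit]

/-- For `Z ~ N(0,1)` and `t ≥ 0`,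
`E[(|Z| - t)₊²] ≤ 4 exp(-t²/2) / ((t² + 2) √(2π t² + 4))`. -/
theorem gaussian_positive_part_second_moment_bound (t : ℝ) (ht : 0 ≤ t) :
    (∫ x, (max (|x| - t) 0) ^ 2 ∂(gaussianReal 0 1)) ≤
      4 * Real.exp (-t ^ 2 / 2) / ((t ^ 2 + 2) * Real.sqrt (2 * Real.pi * t ^ 2 + 4)) := by
  have hπ : (0:ℝ) < π := Real.pi_pos
  have hv2 : (0:ℝ) < Real.sqrt (t ^ 2 + 2 / π) := Real.sqrt_pos.2 (by positivity)
  have h2π : (0:ℝ) < Real.sqrt (2 * π) := Real.sqrt_pos.2 (by positivity)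
  have hBval : (t ^ 2 + 1) * gB t - t * Real.exp (-t ^ 2 / 2)
      = Real.exp (-t ^ 2 / 2) * (2 / ((t ^ 2 + 2) * Real.sqrt (t ^ 2 + 2 / π))) := by
    unfold gB
    field_simp
    ring
  have hsqrt_eq : Real.sqrt (2 * π) * Real.sqrt (t ^ 2 + 2 / π)
      = Real.sqrt (2 * Real.pi * t ^ 2 + 4) := by
    rw [← Real.sqrt_mul (by positivity)]
    congr 1
    field_simp
    ring
  rw [reduce t ht, key_integral t]
  have hstep : (t ^ 2 + 1) * gE t - t * Real.exp (-t ^ 2 / 2)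
      ≤ Real.exp (-t ^ 2 / 2) * (2 / ((t ^ 2 + 2) * Real.sqrt (t ^ 2 + 2 / π))) := by
    rw [← hBval]
    have := gE_le_gB t ht
    nlinarith [sq_nonneg t]
  calc (Real.sqrt (2 * π))⁻¹ * (2 * ((t ^ 2 + 1) * gE t - t * Real.exp (-t ^ 2 / 2)))
      ≤ (Real.sqrt (2 * π))⁻¹
        * (2 * (Real.exp (-t ^ 2 / 2) * (2 / ((t ^ 2 + 2) * Real.sqrt (t ^ 2 + 2 / π))))) := by
        refine mul_le_mul_of_nonneg_left ?_ (inv_nonneg.2 h2π.le)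
        exact mul_le_mul_of_nonneg_left hstep (by norm_num)
    _ = 4 * Real.exp (-t ^ 2 / 2) / ((t ^ 2 + 2) * Real.sqrt (2 * Real.pi * t ^ 2 + 4)) := by
        rw [← hsqrt_eq]
        field_simp
        ring
end

section
/- Let Z ~ N(0,1). For absolutely continuous g : ℝ → ℝ with E[|g'(Z)|] < ∞, one has E[|Z g(Z)|] < ∞ and E[Z g(Z)] = E[g'(Z)]. -/
open MeasureTheory ProbabilityTheory Real Filter Set

noncomputable def steinPhi : ℝ → ℝ := gaussianPDFReal 0 1

lemma steinPhi_def (x : ℝ) : steinPhi x = (Real.sqrt (2 * Real.pi))⁻¹ * Real.exp (-x ^ 2 / 2) := by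
  simp [steinPhi, gaussianPDFReal]

lemma steinPhi_nonneg (x : ℝ) : 0 ≤ steinPhi x := gaussianPDFReal_nonneg 0 1 x

lemma steinPhi_continuous : Continuous steinPhi := by
  have : Continuous fun x : ℝ => (Real.sqrt (2 * Real.pi))⁻¹ * Real.exp (-x ^ 2 / 2) := by
    continuity
  simpa [funext steinPhi_def] using this

lemma steinPhi_even (x : ℝ) : steinPhi (-x) = steinPhi x := by
  simp [steinPhi_def]

lemma steinPhi_hasDerivAt (x : ℝ) :
    HasDerivAt (fun t => -steinPhi t) (x * steinPhi x) x := by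
  have h1 : HasDerivAt (fun t : ℝ => -t ^ 2 / 2) (-x) x := by
    have := ((hasDerivAt_pow 2 x).neg).div_const 2
    simpa using this.congr_deriv (by ring)
  have h2 : HasDerivAt (fun t : ℝ => Real.exp (-t ^ 2 / 2)) (Real.exp (-x ^ 2 / 2) * (-x)) x :=
    (Real.hasDerivAt_exp _).comp x h1
  have h3 : HasDerivAt (fun t : ℝ => (Real.sqrt (2 * Real.pi))⁻¹ * Real.exp (-t ^ 2 / 2))
      ((Real.sqrt (2 * Real.pi))⁻¹ * (Real.exp (-x ^ 2 / 2) * (-x))) x := h2.const_mul _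
  have h4 := h3.neg
  have : (fun t => -steinPhi t) = fun t : ℝ => -((Real.sqrt (2 * Real.pi))⁻¹ * Real.exp (-t ^ 2 / 2)) := by
    funext t; rw [steinPhi_def]
  rw [this]
  exact h4.congr_deriv (by rw [steinPhi_def]; ring)

lemma steinPhi_tendsto_atTop : Tendsto steinPhi atTop (nhds 0) := by
  have h : Tendsto (fun x : ℝ => -x ^ 2 / 2) atTop atBot := by
    have h0 : Tendsto (fun x : ℝ => x ^ 2 / 2) atTop atTop :=
      (tendsto_pow_atTop (by norm_num)).atTop_div_const (by norm_num)
    have := tendsto_neg_atTop_atBot.comp h0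
    refine this.congr fun x => by simp [Function.comp]; ring
  have := (Real.tendsto_exp_atBot.comp h).const_mul ((Real.sqrt (2 * Real.pi))⁻¹)
  simpa [funext steinPhi_def, Function.comp_def] using this

lemma steinPhi_tendsto_atBot : Tendsto steinPhi atBot (nhds 0) := by
  have := steinPhi_tendsto_atTop.comp tendsto_neg_atBot_atTop
  simpa [Function.comp_def, steinPhi_even] using this

lemma integrable_mul_steinPhi : Integrable (fun x => x * steinPhi x) volume := by
  have h := (integrable_mul_exp_neg_mul_sq (b := (1:ℝ)/2) (by norm_num)).const_mul
    ((Real.sqrt (2 * Real.pi))⁻¹)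
  refine h.congr ?_
  filter_upwards with x
  rw [steinPhi_def]
  ring_nf
lemma integral_Ioi_mul_steinPhi (x : ℝ) : ∫ t in Ioi x, t * steinPhi t = steinPhi x := by
  have h := integral_Ioi_of_hasDerivAt_of_tendsto' (f := fun t => -steinPhi t)
    (f' := fun t => t * steinPhi t) (a := x) (m := 0)
    (fun t _ => steinPhi_hasDerivAt t) (integrable_mul_steinPhi.integrableOn)
    (by simpa using steinPhi_tendsto_atTop.neg)
  simpa using h

lemma integral_Iic_mul_steinPhi (x : ℝ) : ∫ t in Iic x, t * steinPhi t = -steinPhi x := by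
  have h := integral_Iic_of_hasDerivAt_of_tendsto' (f := fun t => -steinPhi t)
    (f' := fun t => t * steinPhi t) (a := x) (m := 0)
    (fun t _ => steinPhi_hasDerivAt t) (integrable_mul_steinPhi.integrableOn)
    (by simpa using steinPhi_tendsto_atBot.neg)
  simpa using h

lemma gaussianReal_eq : gaussianReal 0 1 = volume.withDensity (fun x => ENNReal.ofReal (steinPhi x)) := by
  rw [gaussianReal_of_var_ne_zero 0 one_ne_zero]
  rfl

lemma integrable_gaussian_iff (f : ℝ → ℝ) :
    Integrable f (gaussianReal 0 1) ↔ Integrable (fun x => f x * steinPhi x) volume := by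
  rw [gaussianReal_eq]
  rw [integrable_withDensity_iff (steinPhi_continuous.measurable.ennreal_ofReal)
    (by filter_upwards with x; exact ENNReal.ofReal_lt_top)]
  have : ∀ x, f x * (ENNReal.ofReal (steinPhi x)).toReal = f x * steinPhi x := fun x => by
    rw [ENNReal.toReal_ofReal (steinPhi_nonneg x)]
  simp_rw [this]

lemma integral_gaussian_eq (f : ℝ → ℝ) :
    ∫ x, f x ∂(gaussianReal 0 1) = ∫ x, f x * steinPhi x := by
  rw [gaussianReal_eq]
  have : (fun x => ENNReal.ofReal (steinPhi x))
      = fun x => ((steinPhi x).toNNReal : ENNReal) := rfl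
  rw [this, integral_withDensity_eq_integral_smul
    (f := fun x => (steinPhi x).toNNReal)
    (measurable_real_toNNReal.comp steinPhi_continuous.measurable)]
  congr 1
  funext x
  simp [NNReal.smul_def, Real.coe_toNNReal _ (steinPhi_nonneg x), mul_comm]
lemma stein_pos (g g' : ℝ → ℝ) (hmeas : AEStronglyMeasurable g' volume)
    (hac : ∀ a b : ℝ, g b - g a = ∫ x in a..b, g' x) (hg0 : g 0 = 0)
    (hint : Integrable (fun x => g' x * steinPhi x) volume) :
    IntegrableOn (fun t => t * g t * steinPhi t) (Ioi 0) volume ∧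
      ∫ t in Ioi 0, t * g t * steinPhi t = ∫ x in Ioi 0, g' x * steinPhi x := by
  set μ : Measure ℝ := volume.restrict (Ioi 0) with hμ
  set S : Set (ℝ × ℝ) := {q : ℝ × ℝ | q.1 ≤ q.2} with hS
  have hSm : MeasurableSet S := measurableSet_le measurable_fst measurable_snd
  set f : ℝ × ℝ → ℝ := S.indicator (fun q => g' q.1 * (q.2 * steinPhi q.2)) with hf
  have hF : AEStronglyMeasurable (fun q : ℝ × ℝ => g' q.1 * (q.2 * steinPhi q.2))
      (volume.prod volume) :=
    (hmeas.comp_quasiMeasurePreserving Measure.quasiMeasurePreserving_fst).mul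
      ((continuous_snd.mul (steinPhi_continuous.comp continuous_snd)).aestronglyMeasurable)
  have hfm : AEStronglyMeasurable f (μ.prod μ) := by
    rw [hμ, Measure.prod_restrict]
    exact (hF.indicator hSm).restrict
  have hsec : ∀ x t : ℝ, f (x, t) = g' x * (Ici x).indicator (fun s => s * steinPhi s) t := by
    intro x t
    by_cases h : x ≤ t
    · rw [hf, indicator_of_mem (by exact h), indicator_of_mem (by exact h)]
    · rw [hf, indicator_of_notMem (by exact h), indicator_of_notMem (by exact h), mul_zero]
  have hsec2 : ∀ x t : ℝ, f (x, t) = (Iic t).indicator g' x * (t * steinPhi t) := by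
    intro x t
    by_cases h : x ≤ t
    · rw [hf, indicator_of_mem (by exact h), indicator_of_mem (by exact h)]
    · rw [hf, indicator_of_notMem (by exact h), indicator_of_notMem (by exact h), zero_mul]
  have hIci : ∀ x : ℝ, 0 < x →
      ∫ t, (Ici x).indicator (fun s => s * steinPhi s) t ∂μ = steinPhi x := by
    intro x hx
    rw [hμ, integral_indicator measurableSet_Ici, Measure.restrict_restrict measurableSet_Ici]
    have h1 : Ici x ∩ Ioi 0 = Ici x := inter_eq_left.2 fun t ht => lt_of_lt_of_le hx ht
    rw [h1, integral_Ici_eq_integral_Ioi, integral_Ioi_mul_steinPhi]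
  -- sections in t are integrable
  have hsecint : ∀ x : ℝ, Integrable (fun t => f (x, t)) μ := by
    intro x
    simp_rw [hsec x]
    exact ((integrable_mul_steinPhi.restrict.integrableOn.integrable_indicator
      measurableSet_Ici)).const_mul _
  -- integral of norms
  have hnorm : ∀ x : ℝ, 0 < x → ∫ t, ‖f (x, t)‖ ∂μ = ‖g' x‖ * steinPhi x := by
    intro x hx
    have h1 : ∀ t, ‖f (x, t)‖ = ‖g' x‖ * (Ici x).indicator (fun s => s * steinPhi s) t := by
      intro t
      rw [hsec x t, norm_mul]
      congr 1
      rw [norm_indicator_eq_indicator_norm]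
      by_cases h : t ∈ Ici x
      · rw [indicator_of_mem h, indicator_of_mem h, Real.norm_eq_abs,
          abs_of_nonneg (mul_nonneg (le_trans hx.le h) (steinPhi_nonneg t))]
      · rw [indicator_of_notMem h, indicator_of_notMem h]
    simp_rw [h1]
    rw [integral_const_mul, hIci x hx]
  have hnormint : Integrable (fun x => ∫ t, ‖f (x, t)‖ ∂μ) μ := by
    have h2 : Integrable (fun x => ‖g' x‖ * steinPhi x) μ := by
      refine hint.norm.restrict.congr ?_
      filter_upwards with x
      rw [norm_mul, Real.norm_of_nonneg (steinPhi_nonneg x)]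
    refine h2.congr ?_
    filter_upwards [ae_restrict_mem measurableSet_Ioi] with x hx
    exact (hnorm x hx).symm
  have hprod : Integrable f (μ.prod μ) :=
    (integrable_prod_iff hfm).2 ⟨Eventually.of_forall hsecint, hnormint⟩
  -- inner integral in x
  have hinner : ∀ t : ℝ, 0 < t → ∫ x, f (x, t) ∂μ = t * g t * steinPhi t := by
    intro t ht
    simp_rw [hsec2]
    rw [integral_mul_const, hμ, integral_indicator measurableSet_Iic,
      Measure.restrict_restrict measurableSet_Iic]
    have h1 : Iic t ∩ Ioi 0 = Ioc 0 t := by ext y; simp [and_comm]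
    rw [h1, ← intervalIntegral.integral_of_le ht.le, ← hac 0 t, hg0, sub_zero]
    ring
  have hswap := integral_integral_swap (f := Function.curry f)
    (by rwa [Function.uncurry_curry])
  constructor
  · refine (hprod.integral_prod_right).congr ?_
    filter_upwards [ae_restrict_mem measurableSet_Ioi] with t ht
    exact hinner t ht
  · have hL : ∫ x, ∫ t, Function.curry f x t ∂μ ∂μ = ∫ x in Ioi 0, g' x * steinPhi x := by
      refine setIntegral_congr_ae measurableSet_Ioi ?_
      filter_upwards with x hx
      show (∫ t, f (x, t) ∂μ) = g' x * steinPhi x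
      simp_rw [hsec x]
      rw [integral_const_mul, hIci x hx]
    have hR : ∫ t, ∫ x, Function.curry f x t ∂μ ∂μ = ∫ t in Ioi 0, t * g t * steinPhi t := by
      refine setIntegral_congr_ae measurableSet_Ioi ?_
      filter_upwards with t ht
      exact hinner t ht
    rw [hL, hR] at hswap
    exact hswap.symm
lemma stein_neg (g g' : ℝ → ℝ) (hmeas : AEStronglyMeasurable g' volume)
    (hac : ∀ a b : ℝ, g b - g a = ∫ x in a..b, g' x) (hg0 : g 0 = 0)
    (hint : Integrable (fun x => g' x * steinPhi x) volume) :
    IntegrableOn (fun t => t * g t * steinPhi t) (Iic 0) volume ∧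
      ∫ t in Iic 0, t * g t * steinPhi t = ∫ x in Iic 0, g' x * steinPhi x := by
  set q : ℝ → ℝ := fun s => s * g s * steinPhi s with hq
  set G : ℝ → ℝ := fun x => -g (-x) with hG
  set G' : ℝ → ℝ := fun x => g' (-x) with hG'
  have hmeas' : AEStronglyMeasurable G' volume :=
    hmeas.comp_quasiMeasurePreserving
      (Measure.measurePreserving_neg volume).quasiMeasurePreserving
  have hac' : ∀ a b : ℝ, G b - G a = ∫ x in a..b, G' x := by
    intro a b
    have h1 := hac (-b) (-a)
    have h2 : (∫ x in a..b, G' x) = ∫ x in (-b)..(-a), g' x :=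
      intervalIntegral.integral_comp_neg (f := g')
    rw [h2, ← h1]
    show -g (-b) - -g (-a) = _
    ring
  have hint' : Integrable (fun x => G' x * steinPhi x) volume := by
    refine hint.comp_neg.congr ?_
    filter_upwards with x
    show g' (-x) * steinPhi (-x) = g' (-x) * steinPhi x
    rw [steinPhi_even]
  have h := stein_pos G G' hmeas' hac' (by show -g (-0) = 0; simp [hg0]) hint'
  have key : (fun t : ℝ => t * G t * steinPhi t) = fun t => q (-t) := by
    funext t
    show t * (-g (-t)) * steinPhi t = (-t) * g (-t) * steinPhi (-t)
    rw [steinPhi_even]; ring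
  rw [key] at h
  constructor
  · have h1 : Integrable ((Ioi (0:ℝ)).indicator (fun t => q (-t))) volume :=
      h.1.integrable_indicator measurableSet_Ioi
    have h2 := h1.comp_neg
    have h3 : (fun t => (Ioi (0:ℝ)).indicator (fun s => q (-s)) (-t))
        = (Iio (0:ℝ)).indicator q := by
      funext t
      by_cases ht : t < 0
      · rw [indicator_of_mem (by simpa using ht), indicator_of_mem (mem_Iio.2 ht), neg_neg]
      · rw [indicator_of_notMem (by simpa using ht),
          indicator_of_notMem (fun h => ht (mem_Iio.1 h))]
    rw [h3] at h2
    have h4 : IntegrableOn q (Iio 0) volume := (integrable_indicator_iff measurableSet_Iio).1 h2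
    rwa [IntegrableOn, Measure.restrict_congr_set Iio_ae_eq_Iic] at h4
  · have h5 : ∫ t in Iic 0, q t = ∫ t in Ioi 0, q (-t) := by
      rw [integral_comp_neg_Ioi, neg_zero]
    have h6 : ∫ x in Iic 0, g' x * steinPhi x
        = ∫ x in Ioi 0, G' x * steinPhi x := by
      have h7 := integral_comp_neg_Ioi (0:ℝ) (fun x => g' x * steinPhi x)
      rw [neg_zero] at h7
      rw [← h7]
      refine setIntegral_congr_ae measurableSet_Ioi ?_
      filter_upwards with x hx
      show g' (-x) * steinPhi (-x) = G' x * steinPhi x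
      rw [steinPhi_even]
    rw [h5, h6, h.2]
lemma integral_mul_steinPhi_eq_zero : ∫ x, x * steinPhi x = 0 := by
  rw [← intervalIntegral.integral_Iic_add_Ioi (b := (0:ℝ))
    integrable_mul_steinPhi.integrableOn integrable_mul_steinPhi.integrableOn,
    integral_Iic_mul_steinPhi, integral_Ioi_mul_steinPhi]
  ring

/-- Univariate Stein identity: if `g` is absolutely continuous with weak derivative `g'`
(expressed via the fundamental theorem of calculus) and `E[|g'(Z)|] < ∞` for `Z ~ N(0,1)`,
then `E[|Z g(Z)|] < ∞` and `E[Z g(Z)] = E[g'(Z)]`. -/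
theorem stein_identity_univariate (g g' : ℝ → ℝ)
    (hloc : ∀ a b : ℝ, IntervalIntegrable g' MeasureTheory.volume a b)
    (hac : ∀ a b : ℝ, g b - g a = ∫ x in a..b, g' x)
    (hg' : Integrable g' (gaussianReal 0 1)) :
    Integrable (fun x => x * g x) (gaussianReal 0 1) ∧
      ∫ x, x * g x ∂(gaussianReal 0 1) = ∫ x, g' x ∂(gaussianReal 0 1) := by
  have hmeas : AEStronglyMeasurable g' volume := by
    have h1 : ∀ n : ℕ, AEStronglyMeasurable g' (volume.restrict (Ioc (-(n:ℝ)) n)) := fun n =>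
      ((hloc (-(n:ℝ)) n).1).aestronglyMeasurable
    have h2 : (⋃ n : ℕ, Ioc (-(n:ℝ)) (n:ℝ)) = univ := by
      ext x
      simp only [mem_iUnion, mem_Ioc, mem_univ, iff_true]
      obtain ⟨n, hn⟩ := exists_nat_gt |x|
      obtain ⟨hn1, hn2⟩ := abs_lt.1 hn
      exact ⟨n, hn1, hn2.le⟩
    have h3 : AEStronglyMeasurable g' (volume.restrict (⋃ n : ℕ, Ioc (-(n:ℝ)) (n:ℝ))) :=
      aestronglyMeasurable_iUnion_iff.2 h1
    rwa [h2, Measure.restrict_univ] at h3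
  have hint : Integrable (fun x => g' x * steinPhi x) volume :=
    (integrable_gaussian_iff g').1 hg'
  set c := g 0 with hc
  set G : ℝ → ℝ := fun x => g x - c with hGdef
  have hacG : ∀ a b : ℝ, G b - G a = ∫ x in a..b, g' x := by
    intro a b
    show g b - c - (g a - c) = _
    rw [← hac a b]; ring
  have hpos := stein_pos G g' hmeas hacG (by simp [hGdef, hc]) hint
  have hneg := stein_neg G g' hmeas hacG (by simp [hGdef, hc]) hint
  have hqint : Integrable (fun t => t * G t * steinPhi t) volume := by
    have := hneg.1.union hpos.1
    rwa [Iic_union_Ioi, integrableOn_univ] at this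
  have hqeq : ∫ t, t * G t * steinPhi t = ∫ x, g' x * steinPhi x := by
    rw [← intervalIntegral.integral_Iic_add_Ioi (b := (0:ℝ)) hneg.1 hpos.1, hneg.2, hpos.2,
      intervalIntegral.integral_Iic_add_Ioi hint.integrableOn hint.integrableOn]
  have hkey : (fun x => (x * g x) * steinPhi x)
      = fun x => x * G x * steinPhi x + c * (x * steinPhi x) := by
    funext x
    show x * g x * steinPhi x = x * (g x - c) * steinPhi x + c * (x * steinPhi x)
    ring
  have hxgint : Integrable (fun x => (x * g x) * steinPhi x) volume := by
    rw [hkey]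
    exact hqint.add (integrable_mul_steinPhi.const_mul c)
  constructor
  · exact (integrable_gaussian_iff (fun x => x * g x)).2 hxgint
  · rw [integral_gaussian_eq (fun x => x * g x), integral_gaussian_eq g']
    calc ∫ x, (x * g x) * steinPhi x
        = ∫ x, (x * G x * steinPhi x + c * (x * steinPhi x)) := by rw [hkey]
      _ = (∫ x, x * G x * steinPhi x) + ∫ x, c * (x * steinPhi x) :=
          integral_add hqint (integrable_mul_steinPhi.const_mul c)
      _ = ∫ x, g' x * steinPhi x := by
          rw [hqeq, integral_const_mul, integral_mul_steinPhi_eq_zero, mul_zero, add_zero]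
end

section
/- The function x ↦ x · log(e p / max(x, 1)) is concave on [0, p] for every integer p ≥ 1. Consequently, for any random variable X taking values in [0, p], E[X log(ep / max(X, 1))] ≤ E[X] · log(ep / max(E[X], 1)). -/
open MeasureTheory

lemma max_one_image (p : ℕ) (hp : 1 ≤ p) :
    (fun x : ℝ => max x 1) '' Set.Icc (0 : ℝ) p = Set.Icc (1 : ℝ) p := by
  have hp1 : (1 : ℝ) ≤ p := by exact_mod_cast hp
  ext y
  constructor
  · rintro ⟨x, ⟨hx0, hxp⟩, rfl⟩
    exact ⟨le_max_right _ _, max_le hxp hp1⟩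
  · rintro ⟨h1, hyp⟩
    exact ⟨y, ⟨by linarith, hyp⟩, max_eq_left h1⟩

lemma mono_mul_log (p : ℕ) : MonotoneOn (fun x : ℝ => x * Real.log x) (Set.Icc (1 : ℝ) p) := by
  rintro a ⟨ha1, _⟩ b ⟨hb1, _⟩ hab
  have h0a : (0 : ℝ) < a := by linarith
  exact mul_le_mul hab (Real.log_le_log h0a hab) (Real.log_nonneg ha1) (by linarith)

lemma convexOn_comp (p : ℕ) (hp : 1 ≤ p) :
    ConvexOn ℝ (Set.Icc (0 : ℝ) p) (fun x : ℝ => max x 1 * Real.log (max x 1)) := by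
  have himg := max_one_image p hp
  have hg : ConvexOn ℝ ((fun x : ℝ => max x 1) '' Set.Icc (0 : ℝ) p)
      (fun x : ℝ => x * Real.log x) := by
    rw [himg]
    exact Real.convexOn_mul_log.subset (Set.Icc_subset_Ici_self.trans
      (by intro x hx; exact le_trans zero_le_one (Set.mem_Ici.mp hx))) (convex_Icc _ _)
  have hf : ConvexOn ℝ (Set.Icc (0 : ℝ) (p : ℝ)) (fun x : ℝ => max x 1) :=
    (convexOn_id (convex_Icc _ _)).sup (convexOn_const 1 (convex_Icc _ _))
  have hmono : MonotoneOn (fun x : ℝ => x * Real.log x)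
      ((fun x : ℝ => max x 1) '' Set.Icc (0 : ℝ) p) := by
    rw [himg]; exact mono_mul_log p
  exact hg.comp hf hmono

lemma key_eq (p : ℕ) (hp : 1 ≤ p) (x : ℝ) :
    x * Real.log (Real.exp 1 * p / max x 1) =
      Real.log (Real.exp 1 * p) • x - max x 1 * Real.log (max x 1) := by
  have hp0 : (0 : ℝ) < p := by exact_mod_cast hp
  have hep : Real.exp 1 * p ≠ 0 := by positivity
  have hm : (0 : ℝ) < max x 1 := lt_of_lt_of_le zero_lt_one (le_max_right _ _)
  rw [Real.log_div hep (ne_of_gt hm), smul_eq_mul]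
  rcases le_total x 1 with h | h
  · rw [max_eq_right h, Real.log_one]; ring
  · rw [max_eq_left h]; ring

/-- The function `x ↦ x log(ep / (x ∨ 1))` is concave on `[0, p]` for every integer `p ≥ 1`;
consequently, by Jensen's inequality, for any random variable `X` with values in `[0, p]`,
`E[X log(ep / (X ∨ 1))] ≤ E[X] log(ep / (E[X] ∨ 1))`. -/
theorem concave_xlog_and_jensen (p : ℕ) (hp : 1 ≤ p)
    {Ω : Type*} [MeasurableSpace Ω] (P : Measure Ω) [IsProbabilityMeasure P]
    (X : Ω → ℝ) (hX : Measurable X)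
    (hrange : ∀ ω, X ω ∈ Set.Icc (0 : ℝ) p) :
    ConcaveOn ℝ (Set.Icc (0 : ℝ) p)
        (fun x => x * Real.log (Real.exp 1 * p / max x 1)) ∧
      (∫ ω, X ω * Real.log (Real.exp 1 * p / max (X ω) 1) ∂P) ≤
        (∫ ω, X ω ∂P) * Real.log (Real.exp 1 * p / max (∫ ω, X ω ∂P) 1) := by
  have hp1 : (1 : ℝ) ≤ p := by exact_mod_cast hp
  have hc : (0 : ℝ) ≤ Real.log (Real.exp 1 * p) := by
    apply Real.log_nonneg
    nlinarith [Real.exp_pos 1, Real.one_le_exp zero_le_one]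
  have hfun : (fun x : ℝ => x * Real.log (Real.exp 1 * p / max x 1)) =
      fun x : ℝ => Real.log (Real.exp 1 * p) • x - max x 1 * Real.log (max x 1) :=
    funext (key_eq p hp)
  have hconc : ConcaveOn ℝ (Set.Icc (0 : ℝ) p)
      (fun x => x * Real.log (Real.exp 1 * p / max x 1)) := by
    rw [hfun]
    exact ((concaveOn_id (convex_Icc _ _)).smul hc).sub (convexOn_comp p hp)
  refine ⟨hconc, ?_⟩
  have hcont : Continuous (fun x : ℝ => x * Real.log (Real.exp 1 * p / max x 1)) := by
    rw [hfun]
    exact ((continuous_const : Continuous fun _ : ℝ => Real.log (Real.exp 1 * p)).smul continuous_id).sub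
      (Real.continuous_mul_log.comp (continuous_id.max continuous_const))
  have hXi : Integrable X P := by
    refine (integrable_const (p : ℝ)).mono' hX.aestronglyMeasurable (ae_of_all _ fun ω => ?_)
    have h := hrange ω
    rw [Real.norm_eq_abs, abs_le]
    exact ⟨by linarith [h.1, hp1], h.2⟩
  have hgi : Integrable ((fun x : ℝ => x * Real.log (Real.exp 1 * p / max x 1)) ∘ X) P := by
    obtain ⟨C, hC⟩ := isCompact_Icc.exists_bound_of_continuousOn
      (s := Set.Icc (0 : ℝ) p) hcont.continuousOn
    refine (integrable_const C).mono' ((hcont.measurable.comp hX).aestronglyMeasurable)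
      (ae_of_all _ fun ω => hC _ (hrange ω))
  exact hconc.le_map_integral hcont.continuousOn isClosed_Icc
    (ae_of_all _ hrange) hXi hgi
end
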